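/- arXiv:1703.01507 — 9 statements merged into one kernel-verified Lean document; each statement's English description precedes it below -/
import Mathlib

section
/- Let δ ∈ (0, 1/2), let I be a finite index set, and let (x_i)_{i∈I} in ℝⁿ and (x'_i)_{i∈I} in ℝ^{n'} satisfy the (δ, n, n')-pairwise JL condition. Then for every partition 𝔠 of I into nonempty blocks: (1−δ)·J((x_i), 𝔠) ≤ (n/n')·J((x'_i), 𝔠) ≤ (1+δ)·J((x_i), 𝔠). -/
open Finset

variable {I : Type*} [Fintype I] [DecidableEq I]

/-- Centroid of the points indexed by the finite set `C`. -/
noncomputable def centroid {E : Type*} [NormedAddCommGroup E] [NormedSpace ℝ E]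
    (y : I → E) (C : Finset I) : E :=
  (C.card : ℝ)⁻¹ • ∑ i ∈ C, y i

/-- `k`-means cost `J((y_i), 𝔠) = Σ_i ‖y_i − μ_y(𝔠(i))‖²` of a partition, written
as a sum over the blocks. -/
noncomputable def kmeansCost {E : Type*} [NormedAddCommGroup E] [NormedSpace ℝ E]
    (y : I → E) (c : Finpartition (univ : Finset I)) : ℝ :=
  ∑ C ∈ c.parts, ∑ i ∈ C, ‖y i - centroid y C‖ ^ 2

/-- Within-cluster variance `VAR((y_i), C)`. -/
noncomputable def clVar {E : Type*} [NormedAddCommGroup E] [NormedSpace ℝ E]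
    (y : I → E) (C : Finset I) : ℝ :=
  (C.card : ℝ)⁻¹ * ∑ i ∈ C, ‖y i - centroid y C‖ ^ 2

/-- The `(δ, n, n')`-pairwise Johnson–Lindenstrauss condition. -/
def JLpair (n n' : ℕ) (δ : ℝ) {I : Type*} (x : I → EuclideanSpace ℝ (Fin n))
    (x' : I → EuclideanSpace ℝ (Fin n')) : Prop :=
  ∀ i j : I, (1 - δ) * ‖x i - x j‖ ^ 2 ≤ (n : ℝ) / n' * ‖x' i - x' j‖ ^ 2 ∧
    (n : ℝ) / n' * ‖x' i - x' j‖ ^ 2 ≤ (1 + δ) * ‖x i - x j‖ ^ 2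

/-- A partition of `I` into at most `k` (automatically nonempty) blocks is `k`-optimal
for the points `y` if it minimizes the k-means cost among all such partitions. -/
def kOptimal {E : Type*} [NormedAddCommGroup E] [NormedSpace ℝ E] (k : ℕ) (y : I → E)
    (c : Finpartition (univ : Finset I)) : Prop :=
  c.parts.card ≤ k ∧ ∀ d : Finpartition (univ : Finset I), d.parts.card ≤ k →
    kmeansCost y c ≤ kmeansCost y d

/-- A partition is k-means-stable (a local minimum of the k-means algorithm) for points `y`
if every point is at least as close to its own block's centroid as to any other centroid. -/
def kmeansStable {E : Type*} [NormedAddCommGroup E] [NormedSpace ℝ E] (y : I → E)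
    (c : Finpartition (univ : Finset I)) : Prop :=
  ∀ i : I, ∀ Ci ∈ c.parts, i ∈ Ci → ∀ C ∈ c.parts,
    ‖y i - centroid y Ci‖ ≤ ‖y i - centroid y C‖

/-- `p` bounds the cluster spread of `y` with respect to the partition `c`. -/
def spreadBound {E : Type*} [NormedAddCommGroup E] [NormedSpace ℝ E] (p : ℝ) (y : I → E)
    (c : Finpartition (univ : Finset I)) : Prop :=
  ∀ C₁ ∈ c.parts, ∀ C₂ ∈ c.parts, C₁ ≠ C₂ →
    clVar y C₁ * ((C₁.card + C₂.card : ℝ) / C₂.card)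
      + clVar y C₂ * ((C₁.card + C₂.card : ℝ) / C₁.card)
      ≤ p * ‖centroid y C₁ - centroid y C₂‖ ^ 2


lemma sum_sum_sq_sub_eq {E : Type*} [NormedAddCommGroup E] [InnerProductSpace ℝ E]
    (y : I → E) (C : Finset I) :
    ∑ i ∈ C, ∑ j ∈ C, ‖y i - y j‖ ^ 2
      = (2 * C.card : ℝ) * ∑ i ∈ C, ‖y i - centroid y C‖ ^ 2 := by
  rcases C.eq_empty_or_nonempty with h | h
  · simp [h]
  have hc : (C.card : ℝ) ≠ 0 := Nat.cast_ne_zero.mpr (Finset.card_pos.mpr h).ne'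
  set μ := _root_.centroid y C with hμ
  have hsum : ∑ i ∈ C, (y i - μ) = 0 := by
    have hμs : (C.card : ℝ) • μ = ∑ i ∈ C, y i := by
      simp only [hμ, _root_.centroid, smul_smul, mul_inv_cancel₀ hc, one_smul]
    rw [Finset.sum_sub_distrib, Finset.sum_const, ← Nat.cast_smul_eq_nsmul ℝ, hμs, sub_self]
  have expand : ∀ i j : I, ‖y i - y j‖ ^ 2
      = ‖y i - μ‖ ^ 2 + ‖y j - μ‖ ^ 2 - 2 * (inner ℝ (y i - μ) (y j - μ) : ℝ) := by
    intro i j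
    have h0 : y i - y j = (y i - μ) - (y j - μ) := by abel
    rw [h0, @norm_sub_sq_real]
    ring
  have step : ∀ i : I, ∑ j ∈ C,
      (‖y i - μ‖ ^ 2 + ‖y j - μ‖ ^ 2 - 2 * (inner ℝ (y i - μ) (y j - μ) : ℝ))
      = (C.card : ℝ) * ‖y i - μ‖ ^ 2 + ∑ j ∈ C, ‖y j - μ‖ ^ 2 := by
    intro i
    rw [Finset.sum_sub_distrib, Finset.sum_add_distrib, Finset.sum_const, ← Finset.mul_sum,
      ← inner_sum, hsum, inner_zero_right, mul_zero, sub_zero, nsmul_eq_mul]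
  calc ∑ i ∈ C, ∑ j ∈ C, ‖y i - y j‖ ^ 2
      = ∑ i ∈ C, ((C.card : ℝ) * ‖y i - μ‖ ^ 2 + ∑ j ∈ C, ‖y j - μ‖ ^ 2) := by
        refine Finset.sum_congr rfl fun i _ => ?_
        rw [← step i]
        exact Finset.sum_congr rfl fun j _ => expand i j
    _ = (2 * C.card : ℝ) * ∑ i ∈ C, ‖y i - μ‖ ^ 2 := by
        rw [Finset.sum_add_distrib, ← Finset.mul_sum, Finset.sum_const, nsmul_eq_mul]
        ring

/-- k-means cost is preserved up to `1 ± δ` under a JL projection. -/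
theorem kmeans_cost_preserved {n n' : ℕ} (hn'0 : 0 < n') (hn'n : n' < n)
    {δ : ℝ} (hδ0 : 0 < δ) (hδ : δ < 1 / 2)
    {I : Type*} [Fintype I] [DecidableEq I]
    (x : I → EuclideanSpace ℝ (Fin n)) (x' : I → EuclideanSpace ℝ (Fin n'))
    (hJL : JLpair n n' δ x x') (c : Finpartition (univ : Finset I)) :
    (1 - δ) * kmeansCost x c ≤ (n : ℝ) / n' * kmeansCost x' c ∧
    (n : ℝ) / n' * kmeansCost x' c ≤ (1 + δ) * kmeansCost x c := by
  have key : ∀ C ∈ c.parts,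
      (1 - δ) * ∑ i ∈ C, ‖x i - centroid x C‖ ^ 2
        ≤ (n : ℝ) / n' * ∑ i ∈ C, ‖x' i - centroid x' C‖ ^ 2 ∧
      (n : ℝ) / n' * ∑ i ∈ C, ‖x' i - centroid x' C‖ ^ 2
        ≤ (1 + δ) * ∑ i ∈ C, ‖x i - centroid x C‖ ^ 2 := by
    intro C hC
    have hne : C.Nonempty := c.nonempty_of_mem_parts hC
    have hcpos : (0 : ℝ) < 2 * C.card := by
      have := Finset.card_pos.mpr hne
      positivity
    have h1 : ∑ i ∈ C, ∑ j ∈ C, (1 - δ) * ‖x i - x j‖ ^ 2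
        ≤ ∑ i ∈ C, ∑ j ∈ C, (n : ℝ) / n' * ‖x' i - x' j‖ ^ 2 :=
      Finset.sum_le_sum fun i _ => Finset.sum_le_sum fun j _ => (hJL i j).1
    have h2 : ∑ i ∈ C, ∑ j ∈ C, (n : ℝ) / n' * ‖x' i - x' j‖ ^ 2
        ≤ ∑ i ∈ C, ∑ j ∈ C, (1 + δ) * ‖x i - x j‖ ^ 2 :=
      Finset.sum_le_sum fun i _ => Finset.sum_le_sum fun j _ => (hJL i j).2
    simp only [← Finset.mul_sum] at h1 h2
    rw [sum_sum_sq_sub_eq x C, sum_sum_sq_sub_eq x' C] at h1 h2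
    constructor
    · refine le_of_mul_le_mul_left ?_ hcpos
      calc (2 * (C.card : ℝ)) * ((1 - δ) * ∑ i ∈ C, ‖x i - centroid x C‖ ^ 2)
          = (1 - δ) * ((2 * (C.card : ℝ)) * ∑ i ∈ C, ‖x i - centroid x C‖ ^ 2) := by ring
        _ ≤ (n : ℝ) / n' * ((2 * (C.card : ℝ)) * ∑ i ∈ C, ‖x' i - centroid x' C‖ ^ 2) := h1
        _ = (2 * (C.card : ℝ)) * ((n : ℝ) / n' * ∑ i ∈ C, ‖x' i - centroid x' C‖ ^ 2) := by ring
    · refine le_of_mul_le_mul_left ?_ hcpos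
      calc (2 * (C.card : ℝ)) * ((n : ℝ) / n' * ∑ i ∈ C, ‖x' i - centroid x' C‖ ^ 2)
          = (n : ℝ) / n' * ((2 * (C.card : ℝ)) * ∑ i ∈ C, ‖x' i - centroid x' C‖ ^ 2) := by ring
        _ ≤ (1 + δ) * ((2 * (C.card : ℝ)) * ∑ i ∈ C, ‖x i - centroid x C‖ ^ 2) := h2
        _ = (2 * (C.card : ℝ)) * ((1 + δ) * ∑ i ∈ C, ‖x i - centroid x C‖ ^ 2) := by ring
  unfold kmeansCost
  constructor
  · rw [Finset.mul_sum, Finset.mul_sum]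
    exact Finset.sum_le_sum fun C hC => (key C hC).1
  · rw [Finset.mul_sum, Finset.mul_sum]
    exact Finset.sum_le_sum fun C hC => (key C hC).2
end

section
/- Let δ ∈ (0, 1/2) and suppose (x_i)_{i∈I} in ℝⁿ and (x'_i)_{i∈I} in ℝ^{n'} satisfy the (δ, n, n')-pairwise JL condition. Let 𝔠* be a partition of I into nonempty blocks that is k-means-stable for (x_i). Suppose α ∈ [0, 1) is such that for every ordered pair of distinct blocks C_a, C_b of 𝔠* and every i ∈ C_a we have ‖x_i − μ_x(C_a)‖ ≤ α·(1/2)‖μ_x(C_a) − μ_x(C_b)‖ (i.e., there is a relative gap g = 2(1−α) between any two clusters), let p > 0 bound the cluster spread of (x_i) with respect to 𝔠*, and assume δ ≤ (1−α²)/((1+2p)+α²). Then 𝔠* is k-means-stable for (x'_i). -/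
open Finset

variable {I : Type*} [Fintype I] [DecidableEq I]

section Auxiliary

open RealInnerProductSpace

lemma sum_sub_centroid' {E : Type*} [NormedAddCommGroup E] [NormedSpace ℝ E]
    (x : I → E) {C : Finset I} (hC : C.Nonempty) :
    ∑ j ∈ C, (x j - centroid x C) = 0 := by
  have hm : (C.card : ℝ) ≠ 0 := by positivity
  rw [Finset.sum_sub_distrib, Finset.sum_const, _root_.centroid,
    ← Nat.cast_smul_eq_nsmul ℝ, smul_smul, mul_inv_cancel₀ hm, one_smul, sub_self]

lemma sum_norm_sub_sq' {E : Type*} [NormedAddCommGroup E] [InnerProductSpace ℝ E]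
    (x : I → E) {C : Finset I} (hC : C.Nonempty) (y : E) :
    ∑ j ∈ C, ‖y - x j‖ ^ 2
      = C.card * ‖y - centroid x C‖ ^ 2 + ∑ j ∈ C, ‖x j - centroid x C‖ ^ 2 := by
  have key : ∀ j ∈ C, ‖y - x j‖ ^ 2 = ‖y - centroid x C‖ ^ 2
      - 2 * ⟪y - centroid x C, x j - centroid x C⟫
      + ‖x j - centroid x C‖ ^ 2 := by
    intro j _
    have h : y - x j = (y - centroid x C) - (x j - centroid x C) := by abel
    rw [h, norm_sub_sq_real]
  rw [Finset.sum_congr rfl key, Finset.sum_add_distrib, Finset.sum_sub_distrib]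
  have h2 : ∑ j ∈ C, 2 * ⟪y - centroid x C, x j - centroid x C⟫
      = 2 * ⟪y - centroid x C, ∑ j ∈ C, (x j - centroid x C)⟫ := by
    rw [inner_sum, Finset.mul_sum]
  rw [h2, sum_sub_centroid' x hC, inner_zero_right, mul_zero, sub_zero,
    Finset.sum_const, nsmul_eq_mul]

lemma double_sum_norm_sub_sq' {E : Type*} [NormedAddCommGroup E] [InnerProductSpace ℝ E]
    (x : I → E) {C : Finset I} (hC : C.Nonempty) :
    ∑ j ∈ C, ∑ k ∈ C, ‖x j - x k‖ ^ 2
      = 2 * C.card * ∑ j ∈ C, ‖x j - centroid x C‖ ^ 2 := by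
  have h : ∀ j ∈ C, ∑ k ∈ C, ‖x j - x k‖ ^ 2
      = C.card * ‖x j - centroid x C‖ ^ 2 + ∑ k ∈ C, ‖x k - centroid x C‖ ^ 2 :=
    fun j _ => sum_norm_sub_sq' x hC (x j)
  rw [Finset.sum_congr rfl h, Finset.sum_add_distrib, Finset.sum_const,
    ← Finset.mul_sum, nsmul_eq_mul]
  ring

lemma proj_bounds' {n n' : ℕ} {δ : ℝ}
    {I : Type*} [Fintype I] [DecidableEq I]
    {x : I → EuclideanSpace ℝ (Fin n)} {x' : I → EuclideanSpace ℝ (Fin n')}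
    (hJL : JLpair n n' δ x x') {C : Finset I} (hC : C.Nonempty) (i : I) :
    (1 - δ) * ‖x i - centroid x C‖ ^ 2 - 2 * δ * clVar x C
      ≤ (n : ℝ) / n' * ‖x' i - centroid x' C‖ ^ 2 ∧
    (n : ℝ) / n' * ‖x' i - centroid x' C‖ ^ 2
      ≤ (1 + δ) * ‖x i - centroid x C‖ ^ 2 + 2 * δ * clVar x C := by
  set s : ℝ := (n : ℝ) / n' with hs
  set m : ℝ := (C.card : ℝ) with hmdef
  have hm : 0 < m := by
    rw [hmdef]
    exact_mod_cast hC.card_pos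
  set T : ℝ := ∑ j ∈ C, ‖x j - centroid x C‖ ^ 2 with hT
  set T' : ℝ := ∑ j ∈ C, ‖x' j - centroid x' C‖ ^ 2 with hT'
  have f1 : ∑ j ∈ C, ‖x i - x j‖ ^ 2 = m * ‖x i - centroid x C‖ ^ 2 + T :=
    sum_norm_sub_sq' x hC (x i)
  have f2 : ∑ j ∈ C, ‖x' i - x' j‖ ^ 2 = m * ‖x' i - centroid x' C‖ ^ 2 + T' :=
    sum_norm_sub_sq' x' hC (x' i)
  have f3 : s * ∑ j ∈ C, ‖x' i - x' j‖ ^ 2 ≤ (1 + δ) * ∑ j ∈ C, ‖x i - x j‖ ^ 2 := by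
    rw [Finset.mul_sum, Finset.mul_sum]
    exact Finset.sum_le_sum fun j _ => (hJL i j).2
  have f4 : (1 - δ) * ∑ j ∈ C, ‖x i - x j‖ ^ 2 ≤ s * ∑ j ∈ C, ‖x' i - x' j‖ ^ 2 := by
    rw [Finset.mul_sum, Finset.mul_sum]
    exact Finset.sum_le_sum fun j _ => (hJL i j).1
  have f5 : s * (2 * m * T') ≤ (1 + δ) * (2 * m * T) := by
    rw [← double_sum_norm_sub_sq' x hC, ← double_sum_norm_sub_sq' x' hC,
      Finset.mul_sum, Finset.mul_sum]
    refine Finset.sum_le_sum fun j _ => ?_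
    rw [Finset.mul_sum, Finset.mul_sum]
    exact Finset.sum_le_sum fun k _ => (hJL j k).2
  have f6 : (1 - δ) * (2 * m * T) ≤ s * (2 * m * T') := by
    rw [← double_sum_norm_sub_sq' x hC, ← double_sum_norm_sub_sq' x' hC,
      Finset.mul_sum, Finset.mul_sum]
    refine Finset.sum_le_sum fun j _ => ?_
    rw [Finset.mul_sum, Finset.mul_sum]
    exact Finset.sum_le_sum fun k _ => (hJL j k).1
  have f5' : s * T' ≤ (1 + δ) * T := by nlinarith
  have f6' : (1 - δ) * T ≤ s * T' := by nlinarith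
  have hclV : clVar x C = m⁻¹ * T := rfl
  have hmT : m * (m⁻¹ * T) = T := by field_simp
  have hmT2 : 2 * δ * (m * (m⁻¹ * T)) = 2 * δ * T := by rw [hmT]
  rw [f1] at f3 f4
  rw [f2] at f3 f4
  constructor
  · rw [hclV, ← mul_le_mul_iff_right₀ hm]
    linarith [f4, f5', hmT2]
  · rw [hclV, ← mul_le_mul_iff_right₀ hm]
    linarith [f3, f6', hmT2]

set_option maxHeartbeats 1000000 in
lemma key_arith' {δ α p a b D S : ℝ} (hδ0 : 0 ≤ δ) (hδ1 : δ ≤ 1)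
    (hα0 : 0 ≤ α) (hα1 : α ≤ 1)
    (ha0 : 0 ≤ a) (hD : 0 ≤ D)
    (ha : a ≤ α * (D / 2)) (hb : D - a ≤ b)
    (hSp : S ≤ p * D ^ 2) (hSα : S ≤ α ^ 2 * D ^ 2 / 2)
    (hδc : δ * (1 + 2 * p + α ^ 2) ≤ 1 - α ^ 2) :
    (1 + δ) * a ^ 2 + 2 * δ * S ≤ (1 - δ) * b ^ 2 := by
  have hbD : (1 - α / 2) * D ≤ b := by nlinarith
  have hbD0 : 0 ≤ (1 - α / 2) * D := by nlinarith
  have hb2 : ((1 - α / 2) * D) ^ 2 ≤ b ^ 2 := pow_le_pow_left₀ hbD0 hbD 2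
  have ha2 : a ^ 2 ≤ (α * (D / 2)) ^ 2 := pow_le_pow_left₀ ha0 ha 2
  have t1 : (1 + δ) * a ^ 2 ≤ (1 + δ) * (α * (D / 2)) ^ 2 :=
    mul_le_mul_of_nonneg_left ha2 (by linarith)
  have t3 : (1 - δ) * ((1 - α / 2) * D) ^ 2 ≤ (1 - δ) * b ^ 2 :=
    mul_le_mul_of_nonneg_left hb2 (by linarith)
  have h3 : 0 ≤ δ * α ^ 2 * (1 - α) :=
    mul_nonneg (mul_nonneg hδ0 (sq_nonneg α)) (by linarith)
  rcases le_or_gt p (α ^ 2 / 2) with hc | hc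
  · have h2 : 0 ≤ δ * α * (α ^ 2 - 2 * p) :=
      mul_nonneg (mul_nonneg hδ0 hα0) (by linarith)
    have hE : 0 ≤ (1 + α) * ((1 - α) - δ * (1 - α + α ^ 2 / 2 + 2 * p)) := by
      nlinarith [hδc, h2, h3]
    have key : 0 ≤ (1 - α) - δ * (1 - α + α ^ 2 / 2 + 2 * p) := by
      nlinarith [hE, hα0]
    have t2 : 2 * δ * S ≤ 2 * δ * (p * D ^ 2) :=
      mul_le_mul_of_nonneg_left hSp (by linarith)
    have final : (1 + δ) * (α * (D / 2)) ^ 2 + 2 * δ * (p * D ^ 2)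
        ≤ (1 - δ) * ((1 - α / 2) * D) ^ 2 := by
      nlinarith [mul_nonneg (mul_nonneg key hD) hD]
    linarith
  · have h2 : 0 ≤ δ * (2 * p - α ^ 2) := mul_nonneg hδ0 (by linarith)
    have hE : 0 ≤ (1 + α) * ((1 - α) - δ * (1 - α + 3 * α ^ 2 / 2)) := by
      nlinarith [hδc, h2, h3]
    have key : 0 ≤ (1 - α) - δ * (1 - α + 3 * α ^ 2 / 2) := by
      nlinarith [hE, hα0]
    have t2 : 2 * δ * S ≤ 2 * δ * (α ^ 2 * D ^ 2 / 2) :=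
      mul_le_mul_of_nonneg_left hSα (by linarith)
    have final : (1 + δ) * (α * (D / 2)) ^ 2 + 2 * δ * (α ^ 2 * D ^ 2 / 2)
        ≤ (1 - δ) * ((1 - α / 2) * D) ^ 2 := by
      nlinarith [mul_nonneg (mul_nonneg key hD) hD]
    linarith

lemma clVar_nonneg' {E : Type*} [NormedAddCommGroup E] [NormedSpace ℝ E]
    (x : I → E) (C : Finset I) : 0 ≤ clVar x C :=
  mul_nonneg (by positivity) (Finset.sum_nonneg fun _ _ => by positivity)

lemma clVar_le' {E : Type*} [NormedAddCommGroup E] [NormedSpace ℝ E]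
    (x : I → E) {C : Finset I} (hC : C.Nonempty) {r : ℝ} (hr : 0 ≤ r)
    (h : ∀ j ∈ C, ‖x j - centroid x C‖ ≤ r) : clVar x C ≤ r ^ 2 := by
  have hm : (0 : ℝ) < C.card := by exact_mod_cast hC.card_pos
  have hsum : ∑ j ∈ C, ‖x j - centroid x C‖ ^ 2 ≤ C.card * r ^ 2 := by
    calc ∑ j ∈ C, ‖x j - centroid x C‖ ^ 2 ≤ ∑ j ∈ C, r ^ 2 :=
          Finset.sum_le_sum fun j hj => pow_le_pow_left₀ (norm_nonneg _) (h j hj) 2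
      _ = C.card * r ^ 2 := by rw [Finset.sum_const, nsmul_eq_mul]
  rw [clVar, ← mul_le_mul_iff_right₀ hm, ← mul_assoc, mul_inv_cancel₀ hm.ne', one_mul]
  exact hsum

end Auxiliary

/-- A k-means local minimum in the original space remains a local minimum in the projected
space, provided there is a relative gap `g = 2(1−α)` between any two clusters, the cluster
spread is bounded by `p`, and `δ ≤ (1−α²)/((1+2p)+α²)`. -/
theorem local_min_projected {n n' : ℕ} (hn'0 : 0 < n') (hn'n : n' < n)
    {δ : ℝ} (hδ0 : 0 < δ) (hδ : δ < 1 / 2)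
    {I : Type*} [Fintype I] [DecidableEq I]
    (x : I → EuclideanSpace ℝ (Fin n)) (x' : I → EuclideanSpace ℝ (Fin n'))
    (hJL : JLpair n n' δ x x')
    (cstar : Finpartition (univ : Finset I)) (hstable : kmeansStable x cstar)
    (α : ℝ) (hα0 : 0 ≤ α) (hα1 : α < 1)
    (hgap : ∀ Ca ∈ cstar.parts, ∀ Cb ∈ cstar.parts, Ca ≠ Cb → ∀ i ∈ Ca,
      ‖x i - centroid x Ca‖ ≤ α * (1 / 2 * ‖centroid x Ca - centroid x Cb‖))
    (p : ℝ) (hp : 0 < p) (hspread : spreadBound p x cstar)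
    (hδα : δ ≤ (1 - α ^ 2) / ((1 + 2 * p) + α ^ 2)) :
    kmeansStable x' cstar := by
  intro i Ci hCi hiCi C hC
  rcases eq_or_ne Ci C with rfl | hne
  · exact le_refl _
  have hCine : Ci.Nonempty := cstar.nonempty_of_mem_parts hCi
  have hCne : C.Nonempty := cstar.nonempty_of_mem_parts hC
  set μ₁ := centroid x Ci
  set μ₂ := centroid x C
  set a := ‖x i - μ₁‖
  set b := ‖x i - μ₂‖
  set D := ‖μ₁ - μ₂‖
  have hD0 : 0 ≤ D := norm_nonneg _
  -- gap bound for the point i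
  have ha : a ≤ α * (D / 2) := by
    have := hgap Ci hCi C hC hne i hiCi
    linarith [this]
  -- triangle inequality: D ≤ a + b
  have hb : D - a ≤ b := by
    have h : μ₁ - μ₂ = -(x i - μ₁) + (x i - μ₂) := by abel
    have := norm_add_le (-(x i - μ₁)) (x i - μ₂)
    rw [← h, norm_neg] at this
    linarith [this]
  -- variance bounds from the gap
  have hV1 : clVar x Ci ≤ (α * (D / 2)) ^ 2 := by
    apply clVar_le' x hCine (by positivity)
    intro j hj
    have := hgap Ci hCi C hC hne j hj
    linarith [this]
  have hV2 : clVar x C ≤ (α * (D / 2)) ^ 2 := by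
    apply clVar_le' x hCne (by positivity)
    intro j hj
    have := hgap C hC Ci hCi hne.symm j hj
    have hrev : ‖μ₂ - μ₁‖ = D := norm_sub_rev μ₂ μ₁
    rw [hrev] at this
    linarith [this]
  have hV1n : 0 ≤ clVar x Ci := clVar_nonneg' x Ci
  have hV2n : 0 ≤ clVar x C := clVar_nonneg' x C
  -- spread bound gives the sum of variances
  have hm₁ : (0 : ℝ) < Ci.card := by exact_mod_cast hCine.card_pos
  have hm₂ : (0 : ℝ) < C.card := by exact_mod_cast hCne.card_pos
  have hw₁ : (1 : ℝ) ≤ (Ci.card + C.card : ℝ) / C.card := by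
    rw [le_div_iff₀ hm₂, one_mul]; linarith
  have hw₂ : (1 : ℝ) ≤ (Ci.card + C.card : ℝ) / Ci.card := by
    rw [le_div_iff₀ hm₁, one_mul]; linarith
  have hS : clVar x Ci + clVar x C ≤ p * D ^ 2 := by
    have hsp := hspread Ci hCi C hC hne
    have e1 : clVar x Ci ≤ clVar x Ci * ((Ci.card + C.card : ℝ) / C.card) :=
      le_mul_of_one_le_right hV1n hw₁
    have e2 : clVar x C ≤ clVar x C * ((Ci.card + C.card : ℝ) / Ci.card) :=
      le_mul_of_one_le_right hV2n hw₂
    calc clVar x Ci + clVar x C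
        ≤ clVar x Ci * ((Ci.card + C.card : ℝ) / C.card)
          + clVar x C * ((Ci.card + C.card : ℝ) / Ci.card) := by linarith
      _ ≤ p * D ^ 2 := hsp
  have hSα : clVar x Ci + clVar x C ≤ α ^ 2 * D ^ 2 / 2 := by
    have : (α * (D / 2)) ^ 2 = α ^ 2 * D ^ 2 / 4 := by ring
    rw [this] at hV1 hV2
    linarith
  -- δ bound
  have hδc : δ * (1 + 2 * p + α ^ 2) ≤ 1 - α ^ 2 := by
    have hden : (0 : ℝ) < (1 + 2 * p) + α ^ 2 := by positivity
    rw [le_div_iff₀ hden] at hδα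
    linarith [hδα]
  -- the key middle inequality
  have middle : (1 + δ) * a ^ 2 + 2 * δ * (clVar x Ci + clVar x C) ≤ (1 - δ) * b ^ 2 :=
    key_arith' hδ0.le (by linarith) hα0 hα1.le (norm_nonneg _) hD0 ha hb hS hSα hδc
  -- projected bounds
  have hup := (proj_bounds' hJL hCine i).2
  have hlo := (proj_bounds' hJL hCne i).1
  have hs : (0 : ℝ) < (n : ℝ) / n' := by
    have h1 : (0 : ℝ) < n := by exact_mod_cast hn'0.trans hn'n
    have h2 : (0 : ℝ) < n' := by exact_mod_cast hn'0
    positivity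
  have hsq : (n : ℝ) / n' * ‖x' i - centroid x' Ci‖ ^ 2
      ≤ (n : ℝ) / n' * ‖x' i - centroid x' C‖ ^ 2 := by
    linarith [hup, hlo, middle]
  have h2 : ‖x' i - centroid x' Ci‖ ^ 2 ≤ ‖x' i - centroid x' C‖ ^ 2 :=
    le_of_mul_le_mul_left hsq hs
  nlinarith [h2, norm_nonneg (x' i - centroid x' Ci), norm_nonneg (x' i - centroid x' C)]
end

section
/- Let δ ∈ (0, 1/2) and suppose (x_i)_{i∈I} in ℝⁿ and (x'_i)_{i∈I} in ℝ^{n'} satisfy the (δ, n, n')-pairwise JL condition. Let 𝔠'* be a partition of I into nonempty blocks that is k-means-stable for (x'_i). Suppose α ∈ [0, 1) is such that for every ordered pair of distinct blocks C_a, C_b of 𝔠'* and every i ∈ C_a we have ‖x'_i − μ_{x'}(C_a)‖ ≤ α·(1/2)‖μ_{x'}(C_a) − μ_{x'}(C_b)‖ (a relative gap of 1−α times the distance between the projected centres), let p > 0 bound the cluster spread of the original points (x_i) with respect to 𝔠'*, and assume δ/(1−δ) ≤ (1−α²)/((1+2p)+α²). Then 𝔠'* is k-means-stable for (x_i). -/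
open Finset

variable {I : Type*} [Fintype I] [DecidableEq I]

set_option maxHeartbeats 1000000

/- ----------------------------------------------------------------------- -/
/- Auxiliary lemmas                                                          -/
/- ----------------------------------------------------------------------- -/

section Aux

variable {E : Type*} [NormedAddCommGroup E] [InnerProductSpace ℝ E]

lemma aux_sum_sub_centroid (y : I → E) {C : Finset I} (hC : C.Nonempty) :
    ∑ j ∈ C, (y j - centroid y C) = 0 := by
  have hcard : (C.card : ℝ) ≠ 0 := Nat.cast_ne_zero.2 hC.card_pos.ne'
  have hμ : (C.card : ℝ) • centroid y C = ∑ i ∈ C, y i := by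
    simp only [_root_.centroid]
    rw [smul_smul, mul_inv_cancel₀ hcard, one_smul]
  rw [Finset.sum_sub_distrib, Finset.sum_const,
    ← Nat.cast_smul_eq_nsmul ℝ C.card (centroid y C), hμ, sub_self]

lemma aux_sum_normsq (y : I → E) {C : Finset I} (hC : C.Nonempty) (z : E) :
    ∑ j ∈ C, ‖z - y j‖ ^ 2
      = C.card * ‖z - centroid y C‖ ^ 2 + ∑ j ∈ C, ‖y j - centroid y C‖ ^ 2 := by
  have h0 := aux_sum_sub_centroid y hC
  have hterm : ∀ j ∈ C, ‖z - y j‖ ^ 2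
      = ‖z - centroid y C‖ ^ 2
        - 2 * (inner ℝ (z - centroid y C) (y j - centroid y C) : ℝ)
        + ‖y j - centroid y C‖ ^ 2 := by
    intro j hj
    have hz : z - y j = (z - centroid y C) - (y j - centroid y C) := by abel
    rw [hz, @norm_sub_sq_real]
  rw [Finset.sum_congr rfl hterm, Finset.sum_add_distrib, Finset.sum_sub_distrib,
    Finset.sum_const, ← Finset.mul_sum, ← inner_sum, h0, inner_zero_right, nsmul_eq_mul]
  ring

lemma aux_card_clVar (y : I → E) {C : Finset I} (hC : C.Nonempty) :
    ∑ j ∈ C, ‖y j - centroid y C‖ ^ 2 = C.card * clVar y C := by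
  have hcard : (C.card : ℝ) ≠ 0 := Nat.cast_ne_zero.2 hC.card_pos.ne'
  unfold clVar
  rw [← mul_assoc, mul_inv_cancel₀ hcard, one_mul]

lemma aux_sum_normsq' (y : I → E) {C : Finset I} (hC : C.Nonempty) (z : E) :
    ∑ j ∈ C, ‖z - y j‖ ^ 2
      = C.card * ‖z - centroid y C‖ ^ 2 + C.card * clVar y C := by
  rw [aux_sum_normsq y hC z, aux_card_clVar y hC]

lemma aux_cross (y : I → E) {C₁ C₂ : Finset I} (h₁ : C₁.Nonempty) (h₂ : C₂.Nonempty) :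
    ∑ j ∈ C₁, ∑ k ∈ C₂, ‖y j - y k‖ ^ 2
      = C₁.card * C₂.card * ‖centroid y C₁ - centroid y C₂‖ ^ 2
        + C₂.card * (C₁.card * clVar y C₁) + C₁.card * (C₂.card * clVar y C₂) := by
  have hin : ∀ j ∈ C₁, ∑ k ∈ C₂, ‖y j - y k‖ ^ 2
      = C₂.card * ‖y j - centroid y C₂‖ ^ 2 + C₂.card * clVar y C₂ :=
    fun j _ => aux_sum_normsq' y h₂ (y j)
  rw [Finset.sum_congr rfl hin, Finset.sum_add_distrib, Finset.sum_const, ← Finset.mul_sum,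
    nsmul_eq_mul]
  have hrev : ∀ j ∈ C₁, ‖y j - centroid y C₂‖ ^ 2 = ‖centroid y C₂ - y j‖ ^ 2 := by
    intro j _; rw [norm_sub_rev]
  rw [Finset.sum_congr rfl hrev, aux_sum_normsq' y h₁ (centroid y C₂),
    norm_sub_rev (centroid y C₂)]
  ring

/-- Certificate inequality, case A. -/
lemma aux_coefA (δ α p : ℝ) (hδ0 : 0 < δ) (hδ : δ < 1/2) (hα0 : 0 ≤ α) (hα1 : α < 1)
    (hp : 0 < p) (hK7 : 2*δ*(1+p) ≤ 1 - α^2) (hc : α^2*(1-δ-2*p*δ) ≤ 2*p*(1+δ)) :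
    3*δ*α^2 ≤ 2*(1-δ)*(1-α) := by
  have h2d : (0:ℝ) ≤ 1 - 2*δ := by linarith
  have hma : (0:ℝ) ≤ 1 - α := by linarith
  have hd : (0:ℝ) ≤ δ := hδ0.le
  have hpp : (0:ℝ) ≤ p := hp.le
  have hR1 : (0:ℝ) ≤ 1 - α^2 - 2*δ*(1+p) := by linarith
  have hR2 : (0:ℝ) ≤ 2*p*(1+δ) - α^2*(1-δ-2*p*δ) := by linarith
  have hD : (0:ℝ) ≤ 1-δ-2*p*δ := by nlinarith [sq_nonneg α]
  have hs1 : (0:ℝ) ≤ (2*p-1)^2 := sq_nonneg _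
  have hs2 : (0:ℝ) ≤ (1-α)^2 := sq_nonneg _
  linarith [hR1, mul_nonneg hR1 hd, mul_nonneg hR2 hd, mul_nonneg hs2 hd,
    mul_nonneg hs2 hα0, mul_nonneg hR1 hma, mul_nonneg (mul_nonneg hd hd) (by norm_num : (0:ℝ) ≤ 1),
    mul_nonneg hR1 (mul_nonneg hd hα0), mul_nonneg hs2 (mul_nonneg hd hα0),
    mul_nonneg hR1 (mul_nonneg hd hpp), mul_nonneg hs2 (mul_nonneg hd hpp),
    mul_nonneg hd hma, mul_nonneg hs2 (mul_nonneg hd hD),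
    mul_nonneg hs2 (mul_nonneg hma h2d), mul_nonneg hR1 (mul_nonneg hma hD),
    mul_nonneg hs2 (mul_nonneg hma hD),
    mul_nonneg hs1 (mul_nonneg (mul_nonneg hd hd) hα0), mul_nonneg hd hd]

/-- Certificate inequality, case B. -/
lemma aux_coefB (δ α p : ℝ) (hδ0 : 0 < δ) (hδ : δ < 1/2) (hα0 : 0 ≤ α) (hα1 : α < 1)
    (hp : 0 < p) (hK7 : 2*δ*(1+p) ≤ 1 - α^2) (hc : 2*p*(1+δ) ≤ α^2*(1-δ-2*p*δ))
    (hden : 0 < 1-δ-2*p*δ) :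
    δ*α^2*(1-δ-2*p*δ) + 4*δ*p*(1+δ) ≤ 2*(1-δ)*(1-α)*(1-δ-2*p*δ) := by
  have h2d : (0:ℝ) ≤ 1 - 2*δ := by linarith
  have hma : (0:ℝ) ≤ 1 - α := by linarith
  have hd : (0:ℝ) ≤ δ := hδ0.le
  have hpp : (0:ℝ) ≤ p := hp.le
  have hD : (0:ℝ) ≤ 1-δ-2*p*δ := hden.le
  have hR1 : (0:ℝ) ≤ 1 - α^2 - 2*δ*(1+p) := by linarith
  have hR2 : (0:ℝ) ≤ α^2*(1-δ-2*p*δ) - 2*p*(1+δ) := by linarith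
  have hs1 : (0:ℝ) ≤ (2*p-1)^2 := sq_nonneg _
  have hs2 : (0:ℝ) ≤ (1-α)^2 := sq_nonneg _
  linarith [hR1, mul_nonneg hR2 hd, mul_nonneg hs1 hd, mul_nonneg hs2 hd,
    mul_nonneg hR1 hpp, mul_nonneg hR1 hma, mul_nonneg hR2 hma, mul_nonneg hR1 h2d,
    mul_nonneg hs2 (mul_nonneg hd hd), mul_nonneg hR1 (mul_nonneg hd hα0),
    mul_nonneg hR2 (mul_nonneg hd hma), mul_nonneg hs1 (mul_nonneg hd hma),
    mul_nonneg hs2 (mul_nonneg hα0 hD), mul_nonneg hR1 (mul_nonneg hpp hma),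
    mul_nonneg hs2 (mul_nonneg hpp hma), mul_nonneg hR1 hs2,
    mul_nonneg hs2 hs2, mul_nonneg hs2 (mul_nonneg hma h2d),
    mul_nonneg hs2 (mul_nonneg h2d h2d), mul_nonneg hs2 (mul_nonneg h2d hD),
    mul_nonneg (mul_nonneg hd hd) hα0, mul_nonneg hs2 (mul_nonneg (mul_nonneg hd hd) hpp),
    mul_nonneg hs2 (mul_nonneg (mul_nonneg hd hα0) hD)]

/-- The purely real-arithmetic heart of the argument. -/
lemma aux_final (δ α p γ A B A' B' d' D Va Vb V'a V'b : ℝ)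
    (hδ0 : 0 < δ) (hδ : δ < 1/2) (hα0 : 0 ≤ α) (hα1 : α < 1) (hp : 0 < p) (hγ : 0 < γ)
    (hA0 : 0 ≤ A) (hB0 : 0 ≤ B) (hA'0 : 0 ≤ A') (hB'0 : 0 ≤ B') (hd'0 : 0 ≤ d')
    (hVa0 : 0 ≤ Va) (hVb0 : 0 ≤ Vb) (hV'a0 : 0 ≤ V'a) (hV'b0 : 0 ≤ V'b)
    (hK1 : (1-δ)*(A^2+Va) ≤ γ*(A'^2+V'a))
    (hK2 : γ*(B'^2+V'b) ≤ (1+δ)*(B^2+Vb))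
    (hK3a' : γ*V'a ≤ (1+δ)*Va)
    (hK3b : (1-δ)*Vb ≤ γ*V'b) (hK3b' : γ*V'b ≤ (1+δ)*Vb)
    (hK4 : (1-δ)*(D^2+Va+Vb) ≤ γ*(d'^2+V'a+V'b))
    (hgapA : A' ≤ α*(1/2*d'))
    (hVpa : V'a ≤ α^2*d'^2/4) (hVpb : V'b ≤ α^2*d'^2/4)
    (htri : d' ≤ A' + B')
    (hsp : Va + Vb ≤ p*D^2)
    (hK7 : 2*δ*(1+p) ≤ 1-α^2) : A ≤ B := by
  have hδ1 : (0:ℝ) < 1-δ := by linarith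
  have hδ2 : (0:ℝ) < 1+δ := by linarith
  have hden : (0:ℝ) < 1-δ-2*p*δ := by nlinarith [sq_nonneg α]
  -- bound on the projected variances via the spread hypothesis
  have e1 : γ*(V'a+V'b) ≤ (1+δ)*(Va+Vb) := by linarith
  have key : γ*((V'a+V'b)*(1-δ-2*p*δ)) ≤ γ*(p*(1+δ)*d'^2) := by
    linarith [mul_le_mul_of_nonneg_left e1 hδ1.le,
      mul_le_mul_of_nonneg_left hsp (mul_pos hδ1 hδ2).le,
      mul_le_mul_of_nonneg_left hK4 (mul_pos hp hδ2).le,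
      mul_le_mul_of_nonneg_left e1 (mul_pos hp hδ1).le]
  have hσd : (V'a+V'b)*(1-δ-2*p*δ) ≤ p*(1+δ)*d'^2 := le_of_mul_le_mul_left key hγ
  -- geometry in the projected space
  have hdA : A' ≤ α*d'/2 := by linarith [hgapA]
  have hαd : α*d' ≤ d' := by nlinarith
  have h0dA : (0:ℝ) ≤ d' - A' := by linarith
  have hBd : d' - A' ≤ B' := by linarith
  have hB'sq : (d'-A')^2 ≤ B'^2 := by nlinarith
  have hA'sq : A'^2 ≤ α^2*d'^2/4 := by nlinarith
  have hdA2 : A'*d' ≤ α*d'^2/2 := by nlinarith [mul_le_mul_of_nonneg_right hdA hd'0]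
  -- the key "star" inequality in the projected space
  have hstar : (1+δ)*A'^2 + 2*δ*(V'a+V'b) ≤ (1-δ)*B'^2 := by
    rcases le_or_gt (α^2*(1-δ-2*p*δ)) (2*p*(1+δ)) with hc | hc
    · have coefA := aux_coefA δ α p hδ0 hδ hα0 hα1 hp hK7 hc
      have hσ : V'a+V'b ≤ α^2*d'^2/2 := by linarith
      linarith [mul_le_mul_of_nonneg_left hB'sq hδ1.le,
        mul_le_mul_of_nonneg_left hdA2 hδ1.le,
        mul_le_mul_of_nonneg_left hA'sq hδ0.le,
        mul_le_mul_of_nonneg_left hσ hδ0.le,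
        mul_le_mul_of_nonneg_right coefA (sq_nonneg d')]
    · have coefB := aux_coefB δ α p hδ0 hδ hα0 hα1 hp hK7 hc.le hden
      have L1 : 2*δ*(A'^2*(1-δ-2*p*δ)) ≤ 2*δ*((α^2*d'^2/4)*(1-δ-2*p*δ)) :=
        mul_le_mul_of_nonneg_left (mul_le_mul_of_nonneg_right hA'sq hden.le)
          (by linarith : (0:ℝ) ≤ 2*δ)
      have L2 : 2*δ*((V'a+V'b)*(1-δ-2*p*δ)) ≤ 2*δ*(p*(1+δ)*d'^2) :=
        mul_le_mul_of_nonneg_left hσd (by linarith : (0:ℝ) ≤ 2*δ)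
      have L3 : (δ*α^2*(1-δ-2*p*δ) + 4*δ*p*(1+δ))*d'^2
          ≤ (2*(1-δ)*(1-α)*(1-δ-2*p*δ))*d'^2 :=
        mul_le_mul_of_nonneg_right coefB (sq_nonneg d')
      have hmain : (2*δ*A'^2 + 2*δ*(V'a+V'b))*(1-δ-2*p*δ)
          ≤ ((1-δ)*(1-α)*d'^2)*(1-δ-2*p*δ) := by linarith [L1, L2, L3]
      have h4 : 2*δ*A'^2 + 2*δ*(V'a+V'b) ≤ (1-δ)*(1-α)*d'^2 :=
        le_of_mul_le_mul_right hmain hden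
      linarith [h4, mul_le_mul_of_nonneg_left hB'sq hδ1.le,
        mul_le_mul_of_nonneg_left hdA2 hδ1.le]
  -- assemble everything
  have hABsq : (1-δ^2)*A^2 ≤ (1-δ^2)*B^2 := by
    linarith [mul_le_mul_of_nonneg_left hK1 hδ2.le,
      mul_le_mul_of_nonneg_left hstar hγ.le,
      mul_le_mul_of_nonneg_left hK2 hδ1.le,
      mul_le_mul_of_nonneg_left hK3a' hδ1.le,
      mul_le_mul_of_nonneg_left hK3b hδ2.le]
  have hsq : A^2 ≤ B^2 := by
    have h1 : (0:ℝ) < 1 - δ^2 := by nlinarith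
    exact le_of_mul_le_mul_left hABsq h1
  have := Real.sqrt_le_sqrt hsq
  rwa [Real.sqrt_sq hA0, Real.sqrt_sq hB0] at this

end Aux

/-- A k-means local minimum in the projected space remains a local minimum in the original
space, provided there is a relative gap `1−α` between any two clusters in the projected
space, the cluster spread of the original points is bounded by `p`, and
`δ/(1−δ) ≤ (1−α²)/((1+2p)+α²)`. -/
theorem local_min_inverted {n n' : ℕ} (hn'0 : 0 < n') (hn'n : n' < n)
    {δ : ℝ} (hδ0 : 0 < δ) (hδ : δ < 1 / 2)
    {I : Type*} [Fintype I] [DecidableEq I]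
    (x : I → EuclideanSpace ℝ (Fin n)) (x' : I → EuclideanSpace ℝ (Fin n'))
    (hJL : JLpair n n' δ x x')
    (cstar : Finpartition (univ : Finset I)) (hstable : kmeansStable x' cstar)
    (α : ℝ) (hα0 : 0 ≤ α) (hα1 : α < 1)
    (hgap : ∀ Ca ∈ cstar.parts, ∀ Cb ∈ cstar.parts, Ca ≠ Cb → ∀ i ∈ Ca,
      ‖x' i - centroid x' Ca‖ ≤ α * (1 / 2 * ‖centroid x' Ca - centroid x' Cb‖))
    (p : ℝ) (hp : 0 < p) (hspread : spreadBound p x cstar)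
    (hδα : δ / (1 - δ) ≤ (1 - α ^ 2) / ((1 + 2 * p) + α ^ 2)) :
    kmeansStable x cstar := by
  intro i Ca hCa hiCa Cb hCb
  by_cases hab : Ca = Cb
  · subst hab; exact le_rfl
  have hCane : Ca.Nonempty := cstar.nonempty_of_mem_parts hCa
  have hCbne : Cb.Nonempty := cstar.nonempty_of_mem_parts hCb
  have hma : (0:ℝ) < Ca.card := by exact_mod_cast hCane.card_pos
  have hmb : (0:ℝ) < Cb.card := by exact_mod_cast hCbne.card_pos
  have hγ : (0:ℝ) < (n:ℝ)/(n':ℝ) := by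
    have h1 : (0:ℝ) < (n:ℝ) := by exact_mod_cast hn'0.trans hn'n
    have h2 : (0:ℝ) < (n':ℝ) := by exact_mod_cast hn'0
    exact div_pos h1 h2
  -- JL summed over a cluster
  have JL1 : ∀ (C : Finset I) (z : I),
      (1-δ) * ∑ j ∈ C, ‖x z - x j‖^2 ≤ (n:ℝ)/(n':ℝ) * ∑ j ∈ C, ‖x' z - x' j‖^2 := by
    intro C z
    rw [Finset.mul_sum, Finset.mul_sum]
    exact Finset.sum_le_sum fun j _ => (hJL z j).1
  have JL2 : ∀ (C : Finset I) (z : I),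
      (n:ℝ)/(n':ℝ) * ∑ j ∈ C, ‖x' z - x' j‖^2 ≤ (1+δ) * ∑ j ∈ C, ‖x z - x j‖^2 := by
    intro C z
    rw [Finset.mul_sum, Finset.mul_sum]
    exact Finset.sum_le_sum fun j _ => (hJL z j).2
  -- K1
  have hK1 : (1-δ)*(‖x i - centroid x Ca‖^2 + clVar x Ca)
      ≤ (n:ℝ)/(n':ℝ)*(‖x' i - centroid x' Ca‖^2 + clVar x' Ca) := by
    have h := JL1 Ca i
    rw [aux_sum_normsq' x hCane (x i), aux_sum_normsq' x' hCane (x' i)] at h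
    nlinarith [h, hma]
  -- K2
  have hK2 : (n:ℝ)/(n':ℝ)*(‖x' i - centroid x' Cb‖^2 + clVar x' Cb)
      ≤ (1+δ)*(‖x i - centroid x Cb‖^2 + clVar x Cb) := by
    have h := JL2 Cb i
    rw [aux_sum_normsq' x hCbne (x i), aux_sum_normsq' x' hCbne (x' i)] at h
    nlinarith [h, hmb]
  -- within-cluster double sums (K3)
  have hK3a' : (n:ℝ)/(n':ℝ)*clVar x' Ca ≤ (1+δ)*clVar x Ca := by
    have h : (n:ℝ)/(n':ℝ) * ∑ j ∈ Ca, ∑ k ∈ Ca, ‖x' j - x' k‖^2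
        ≤ (1+δ) * ∑ j ∈ Ca, ∑ k ∈ Ca, ‖x j - x k‖^2 := by
      rw [Finset.mul_sum, Finset.mul_sum]
      exact Finset.sum_le_sum fun j _ => JL2 Ca j
    rw [aux_cross x hCane hCane, aux_cross x' hCane hCane] at h
    simp only [sub_self, norm_zero] at h
    nlinarith [h, mul_pos hma hma]
  have hK3b : (1-δ)*clVar x Cb ≤ (n:ℝ)/(n':ℝ)*clVar x' Cb := by
    have h : (1-δ) * ∑ j ∈ Cb, ∑ k ∈ Cb, ‖x j - x k‖^2
        ≤ (n:ℝ)/(n':ℝ) * ∑ j ∈ Cb, ∑ k ∈ Cb, ‖x' j - x' k‖^2 := by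
      rw [Finset.mul_sum, Finset.mul_sum]
      exact Finset.sum_le_sum fun j _ => JL1 Cb j
    rw [aux_cross x hCbne hCbne, aux_cross x' hCbne hCbne] at h
    simp only [sub_self, norm_zero] at h
    nlinarith [h, mul_pos hmb hmb]
  have hK3b' : (n:ℝ)/(n':ℝ)*clVar x' Cb ≤ (1+δ)*clVar x Cb := by
    have h : (n:ℝ)/(n':ℝ) * ∑ j ∈ Cb, ∑ k ∈ Cb, ‖x' j - x' k‖^2
        ≤ (1+δ) * ∑ j ∈ Cb, ∑ k ∈ Cb, ‖x j - x k‖^2 := by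
      rw [Finset.mul_sum, Finset.mul_sum]
      exact Finset.sum_le_sum fun j _ => JL2 Cb j
    rw [aux_cross x hCbne hCbne, aux_cross x' hCbne hCbne] at h
    simp only [sub_self, norm_zero] at h
    nlinarith [h, mul_pos hmb hmb]
  -- cross-cluster sums (K4)
  have hK4 : (1-δ)*(‖centroid x Ca - centroid x Cb‖^2 + clVar x Ca + clVar x Cb)
      ≤ (n:ℝ)/(n':ℝ)*(‖centroid x' Ca - centroid x' Cb‖^2 + clVar x' Ca + clVar x' Cb) := by
    have h : (1-δ) * ∑ j ∈ Ca, ∑ k ∈ Cb, ‖x j - x k‖^2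
        ≤ (n:ℝ)/(n':ℝ) * ∑ j ∈ Ca, ∑ k ∈ Cb, ‖x' j - x' k‖^2 := by
      rw [Finset.mul_sum, Finset.mul_sum]
      exact Finset.sum_le_sum fun j _ => JL1 Cb j
    rw [aux_cross x hCane hCbne, aux_cross x' hCane hCbne] at h
    nlinarith [h, mul_pos hma hmb]
  -- gap facts
  have hgapA := hgap Ca hCa Cb hCb hab i hiCa
  have hVpa : clVar x' Ca ≤ α^2*‖centroid x' Ca - centroid x' Cb‖^2/4 := by
    have hb : ∀ j ∈ Ca, ‖x' j - centroid x' Ca‖^2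
        ≤ α^2*‖centroid x' Ca - centroid x' Cb‖^2/4 := by
      intro j hj
      have h := hgap Ca hCa Cb hCb hab j hj
      nlinarith [norm_nonneg (x' j - centroid x' Ca),
        norm_nonneg (centroid x' Ca - centroid x' Cb)]
    have hsum : ∑ j ∈ Ca, ‖x' j - centroid x' Ca‖^2
        ≤ Ca.card * (α^2*‖centroid x' Ca - centroid x' Cb‖^2/4) := by
      calc ∑ j ∈ Ca, ‖x' j - centroid x' Ca‖^2
          ≤ ∑ _j ∈ Ca, α^2*‖centroid x' Ca - centroid x' Cb‖^2/4 :=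
            Finset.sum_le_sum hb
        _ = Ca.card * (α^2*‖centroid x' Ca - centroid x' Cb‖^2/4) := by
            rw [Finset.sum_const, nsmul_eq_mul]
    have h2 : Ca.card * clVar x' Ca
        ≤ Ca.card * (α^2*‖centroid x' Ca - centroid x' Cb‖^2/4) := by
      rwa [← aux_card_clVar x' hCane]
    exact le_of_mul_le_mul_left h2 hma
  have hVpb : clVar x' Cb ≤ α^2*‖centroid x' Ca - centroid x' Cb‖^2/4 := by
    have hb : ∀ j ∈ Cb, ‖x' j - centroid x' Cb‖^2
        ≤ α^2*‖centroid x' Ca - centroid x' Cb‖^2/4 := by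
      intro j hj
      have h := hgap Cb hCb Ca hCa (Ne.symm hab) j hj
      rw [norm_sub_rev (centroid x' Cb)] at h
      nlinarith [norm_nonneg (x' j - centroid x' Cb),
        norm_nonneg (centroid x' Ca - centroid x' Cb)]
    have hsum : ∑ j ∈ Cb, ‖x' j - centroid x' Cb‖^2
        ≤ Cb.card * (α^2*‖centroid x' Ca - centroid x' Cb‖^2/4) := by
      calc ∑ j ∈ Cb, ‖x' j - centroid x' Cb‖^2
          ≤ ∑ _j ∈ Cb, α^2*‖centroid x' Ca - centroid x' Cb‖^2/4 :=
            Finset.sum_le_sum hb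
        _ = Cb.card * (α^2*‖centroid x' Ca - centroid x' Cb‖^2/4) := by
            rw [Finset.sum_const, nsmul_eq_mul]
    have h2 : Cb.card * clVar x' Cb
        ≤ Cb.card * (α^2*‖centroid x' Ca - centroid x' Cb‖^2/4) := by
      rwa [← aux_card_clVar x' hCbne]
    exact le_of_mul_le_mul_left h2 hmb
  -- triangle inequality
  have htri : ‖centroid x' Ca - centroid x' Cb‖
      ≤ ‖x' i - centroid x' Ca‖ + ‖x' i - centroid x' Cb‖ := by
    have h := norm_add_le (centroid x' Ca - x' i) (x' i - centroid x' Cb)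
    rw [sub_add_sub_cancel, norm_sub_rev (centroid x' Ca) (x' i)] at h
    exact h
  -- variances are nonnegative
  have hVa0 : 0 ≤ clVar x Ca :=
    mul_nonneg (by positivity) (Finset.sum_nonneg fun j _ => sq_nonneg _)
  have hVb0 : 0 ≤ clVar x Cb :=
    mul_nonneg (by positivity) (Finset.sum_nonneg fun j _ => sq_nonneg _)
  have hV'a0 : 0 ≤ clVar x' Ca :=
    mul_nonneg (by positivity) (Finset.sum_nonneg fun j _ => sq_nonneg _)
  have hV'b0 : 0 ≤ clVar x' Cb :=
    mul_nonneg (by positivity) (Finset.sum_nonneg fun j _ => sq_nonneg _)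
  -- spread
  have hsp : clVar x Ca + clVar x Cb ≤ p*‖centroid x Ca - centroid x Cb‖^2 := by
    have h := hspread Ca hCa Cb hCb hab
    have e1 : (1:ℝ) ≤ ((Ca.card:ℝ)+(Cb.card:ℝ))/(Cb.card:ℝ) := by
      rw [le_div_iff₀ hmb]; linarith
    have e2 : (1:ℝ) ≤ ((Ca.card:ℝ)+(Cb.card:ℝ))/(Ca.card:ℝ) := by
      rw [le_div_iff₀ hma]; linarith
    have f1 := le_mul_of_one_le_right hVa0 e1
    have f2 := le_mul_of_one_le_right hVb0 e2
    linarith [h, f1, f2]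
  -- the δ-condition
  have hK7 : 2*δ*(1+p) ≤ 1 - α^2 := by
    have h1 : (0:ℝ) < 1 - δ := by linarith
    have h2 : (0:ℝ) < (1 + 2*p) + α^2 := by positivity
    rw [div_le_div_iff₀ h1 h2] at hδα
    nlinarith [hδα]
  exact aux_final δ α p ((n:ℝ)/(n':ℝ))
    ‖x i - centroid x Ca‖ ‖x i - centroid x Cb‖
    ‖x' i - centroid x' Ca‖ ‖x' i - centroid x' Cb‖
    ‖centroid x' Ca - centroid x' Cb‖ ‖centroid x Ca - centroid x Cb‖
    (clVar x Ca) (clVar x Cb) (clVar x' Ca) (clVar x' Cb)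
    hδ0 hδ hα0 hα1 hp hγ (norm_nonneg _) (norm_nonneg _) (norm_nonneg _) (norm_nonneg _)
    (norm_nonneg _) hVa0 hVb0 hV'a0 hV'b0
    hK1 hK2 hK3a' hK3b hK3b' hK4 hgapA hVpa hVpb htri hsp hK7
end

section
/- Let δ ∈ (0, 1/2) and suppose (x_i)_{i∈I} in ℝⁿ and (x'_i)_{i∈I} in ℝ^{n'} satisfy the (δ, n, n')-pairwise JL condition. Let k ≥ 2, let 𝔠_k be a k-optimal and 𝔠_{k−1} a (k−1)-optimal partition for (x_i), and let 𝔠'_k be a k-optimal and 𝔠'_{k−1} a (k−1)-optimal partition for (x'_i). If σ > 0 satisfies J((x_i), 𝔠_k) ≤ σ²·J((x_i), 𝔠_{k−1}) (σ-separatedness of the original data), then J((x'_i), 𝔠'_k) ≤ σ²·((1+δ)/(1−δ))·J((x'_i), 𝔠'_{k−1}); that is, the projected data is σ·√((1+δ)/(1−δ))-separated. -/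
open Finset

variable {I : Type*} [Fintype I] [DecidableEq I]

set_option linter.unusedSectionVars false in
lemma sum_sq_centroid {E : Type*} [NormedAddCommGroup E] [InnerProductSpace ℝ E]
    (y : I → E) (C : Finset I) (hC : C.Nonempty) :
    ∑ i ∈ C, ∑ j ∈ C, ‖y i - y j‖ ^ 2
      = (2 * C.card : ℝ) * ∑ i ∈ C, ‖y i - centroid y C‖ ^ 2 := by
  have hm : (0:ℝ) < C.card := by exact_mod_cast hC.card_pos
  set m : ℝ := (C.card : ℝ) with hmdef
  set S : E := ∑ i ∈ C, y i with hS
  have e1 : ∑ i ∈ C, ∑ j ∈ C, ‖y i - y j‖ ^ 2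
      = 2 * m * (∑ i ∈ C, ‖y i‖ ^ 2) - 2 * ‖S‖ ^ 2 := by
    simp only [norm_sub_sq_real]
    simp only [Finset.sum_add_distrib, Finset.sum_sub_distrib, Finset.sum_const,
      nsmul_eq_mul, ← Finset.mul_sum, ← inner_sum, ← sum_inner,
      real_inner_self_eq_norm_sq, ← hS, ← hmdef]
    ring
  have e2 : ∑ i ∈ C, ‖y i - centroid y C‖ ^ 2
      = (∑ i ∈ C, ‖y i‖ ^ 2) - m⁻¹ * ‖S‖ ^ 2 := by
    have hc : centroid y C = m⁻¹ • S := rfl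
    simp only [norm_sub_sq_real, hc, real_inner_smul_right, norm_smul,
      Finset.sum_add_distrib, Finset.sum_sub_distrib, Finset.sum_const,
      nsmul_eq_mul, ← Finset.mul_sum, ← sum_inner, real_inner_self_eq_norm_sq,
      ← hS, ← hmdef, Real.norm_eq_abs, abs_inv, abs_of_pos hm, mul_pow]
    field_simp
    ring
  rw [e1, e2]
  field_simp

/-- Comparison of k-means costs of the *same* partition under the JL condition. -/
lemma cost_comp {n n' : ℕ} {δ : ℝ}
    (x : I → EuclideanSpace ℝ (Fin n)) (x' : I → EuclideanSpace ℝ (Fin n'))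
    (hJL : JLpair n n' δ x x') (c : Finpartition (univ : Finset I)) :
    (1 - δ) * kmeansCost x c ≤ (n : ℝ) / n' * kmeansCost x' c ∧
      (n : ℝ) / n' * kmeansCost x' c ≤ (1 + δ) * kmeansCost x c := by
  constructor <;>
  · unfold kmeansCost
    rw [Finset.mul_sum, Finset.mul_sum]
    apply Finset.sum_le_sum
    intro C hC
    have hne : C.Nonempty := c.nonempty_of_mem_parts hC
    have hm : (0:ℝ) < C.card := by exact_mod_cast hne.card_pos
    have h1 := sum_sq_centroid x C hne
    have h2 := sum_sq_centroid x' C hne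
    have hsum : (1 - δ) * (∑ i ∈ C, ∑ j ∈ C, ‖x i - x j‖ ^ 2)
        ≤ (n : ℝ) / n' * (∑ i ∈ C, ∑ j ∈ C, ‖x' i - x' j‖ ^ 2) ∧
        (n : ℝ) / n' * (∑ i ∈ C, ∑ j ∈ C, ‖x' i - x' j‖ ^ 2)
        ≤ (1 + δ) * (∑ i ∈ C, ∑ j ∈ C, ‖x i - x j‖ ^ 2) := by
      constructor <;>
      · rw [Finset.mul_sum, Finset.mul_sum]
        refine Finset.sum_le_sum fun i _ => ?_
        rw [Finset.mul_sum, Finset.mul_sum]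
        refine Finset.sum_le_sum fun j _ => ?_
        first
          | exact (hJL i j).1
          | exact (hJL i j).2
    rw [h1, h2] at hsum
    obtain ⟨hl, hr⟩ := hsum
    nlinarith [hl, hr, hm]

lemma kmeansCost_nonneg {E : Type*} [NormedAddCommGroup E] [NormedSpace ℝ E]
    (y : I → E) (c : Finpartition (univ : Finset I)) : 0 ≤ kmeansCost y c :=
  Finset.sum_nonneg fun C _ => Finset.sum_nonneg fun i _ => by positivity

/-- σ-separatedness is transmitted to the projected space, weakened by the factor
`√((1+δ)/(1−δ))`. -/
theorem sigma_separatedness_preserved {n n' : ℕ} (hn'0 : 0 < n') (hn'n : n' < n)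
    {δ : ℝ} (hδ0 : 0 < δ) (hδ : δ < 1 / 2)
    {I : Type*} [Fintype I] [DecidableEq I]
    (x : I → EuclideanSpace ℝ (Fin n)) (x' : I → EuclideanSpace ℝ (Fin n'))
    (hJL : JLpair n n' δ x x') (k : ℕ) (hk : 2 ≤ k)
    (ck ck1 c'k c'k1 : Finpartition (univ : Finset I))
    (hck : kOptimal k x ck) (hck1 : kOptimal (k - 1) x ck1)
    (hc'k : kOptimal k x' c'k) (hc'k1 : kOptimal (k - 1) x' c'k1)
    (σ : ℝ) (hσ : 0 < σ)
    (hsep : kmeansCost x ck ≤ σ ^ 2 * kmeansCost x ck1) :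
    kmeansCost x' c'k ≤ σ ^ 2 * ((1 + δ) / (1 - δ)) * kmeansCost x' c'k1 := by
  have hn0 : (0:ℝ) < n := by exact_mod_cast hn'0.trans hn'n
  have hn'0' : (0:ℝ) < n' := by exact_mod_cast hn'0
  have hr : (0:ℝ) < (n : ℝ) / n' := by positivity
  have h1δ : (0:ℝ) < 1 - δ := by linarith
  set r : ℝ := (n : ℝ) / n' with hrdef
  set A := kmeansCost x' c'k
  set B := kmeansCost x' c'k1
  have a1 : A ≤ kmeansCost x' ck := hc'k.2 ck hck.1
  have a2 : r * kmeansCost x' ck ≤ (1 + δ) * kmeansCost x ck := (cost_comp x x' hJL ck).2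
  have a4 : kmeansCost x ck1 ≤ kmeansCost x c'k1 := hck1.2 c'k1 hc'k1.1
  have a5 : (1 - δ) * kmeansCost x c'k1 ≤ r * B := (cost_comp x x' hJL c'k1).1
  have h6 : r * A ≤ (1 + δ) * σ ^ 2 * kmeansCost x c'k1 := by
    have b1 : r * A ≤ r * kmeansCost x' ck := mul_le_mul_of_nonneg_left a1 hr.le
    have b2 : (1 + δ) * kmeansCost x ck ≤ (1 + δ) * (σ ^ 2 * kmeansCost x ck1) :=
      mul_le_mul_of_nonneg_left hsep (by linarith)
    have b3 : (1 + δ) * (σ ^ 2 * kmeansCost x ck1) ≤ (1 + δ) * σ ^ 2 * kmeansCost x c'k1 := by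
      have h := mul_le_mul_of_nonneg_left a4 (show (0:ℝ) ≤ (1 + δ) * σ ^ 2 by positivity)
      calc (1 + δ) * (σ ^ 2 * kmeansCost x ck1) = (1 + δ) * σ ^ 2 * kmeansCost x ck1 := by ring
        _ ≤ (1 + δ) * σ ^ 2 * kmeansCost x c'k1 := h
    linarith
  have h7 : (1 - δ) * (r * A) ≤ (1 + δ) * σ ^ 2 * (r * B) := by
    have c1 : (1 - δ) * (r * A) ≤ (1 - δ) * ((1 + δ) * σ ^ 2 * kmeansCost x c'k1) :=
      mul_le_mul_of_nonneg_left h6 h1δ.le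
    have c2 : (1 + δ) * σ ^ 2 * ((1 - δ) * kmeansCost x c'k1) ≤ (1 + δ) * σ ^ 2 * (r * B) := by
      apply mul_le_mul_of_nonneg_left a5
      nlinarith [sq_nonneg σ]
    nlinarith [c1, c2]
  have h8 : (1 - δ) * A ≤ (1 + δ) * σ ^ 2 * B := by
    have : r * ((1 - δ) * A) ≤ r * ((1 + δ) * σ ^ 2 * B) := by nlinarith [h7]
    exact le_of_mul_le_mul_left this hr
  have hEq : σ ^ 2 * ((1 + δ) / (1 - δ)) * B = (1 + δ) * σ ^ 2 * B / (1 - δ) := by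
    ring
  rw [hEq, le_div_iff₀ h1δ]
  linarith [h8]
end

section
/- Let δ ∈ (0, 1/2) and suppose (x_i)_{i∈I} in ℝⁿ and (x'_i)_{i∈I} in ℝ^{n'} satisfy the (δ, n, n')-pairwise JL condition. Let C₁, C₂ ⊆ I be disjoint nonempty sets with m₁ = |C₁|, m₂ = |C₂|, m₁₂ = m₁+m₂, with μ_x(C₁) ≠ μ_x(C₂), and let p > 0 satisfy VAR((x_i),C₁)·m₁₂/m₂ + VAR((x_i),C₂)·m₁₂/m₁ ≤ p·‖μ_x(C₁) − μ_x(C₂)‖². Then (1 − δ(1+2p))·‖μ_x(C₁) − μ_x(C₂)‖² ≤ (n/n')·‖μ_{x'}(C₁) − μ_{x'}(C₂)‖² ≤ (1 + δ(1+2p))·‖μ_x(C₁) − μ_x(C₂)‖². -/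
open Finset

variable {I : Type*} [Fintype I] [DecidableEq I]

open RealInnerProductSpace

section Helpers
variable {E : Type*} [NormedAddCommGroup E] [InnerProductSpace ℝ E]

lemma sum_eq_card_smul_centroid (y : I → E) {C : Finset I} (hC : C.Nonempty) :
    ∑ i ∈ C, y i = (C.card : ℝ) • centroid y C := by
  unfold _root_.centroid
  rw [smul_smul, mul_inv_cancel₀ (Nat.cast_ne_zero.mpr hC.card_pos.ne'), one_smul]

lemma sum_norm_sub_centroid (y : I → E) {C : Finset I} (hC : C.Nonempty) :
    ∑ i ∈ C, ‖y i - centroid y C‖ ^ 2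
      = ∑ i ∈ C, ‖y i‖ ^ 2 - (C.card : ℝ) * ‖centroid y C‖ ^ 2 := by
  have h := sum_eq_card_smul_centroid y hC
  have key : ∑ i ∈ C, (inner ℝ (y i) (centroid y C) : ℝ)
      = (C.card : ℝ) * ‖centroid y C‖ ^ 2 := by
    rw [← sum_inner, h, real_inner_smul_left, real_inner_self_eq_norm_sq]
  simp only [norm_sub_sq_real, Finset.sum_add_distrib, Finset.sum_sub_distrib,
    Finset.sum_const, nsmul_eq_mul, ← Finset.mul_sum, key]
  ring

lemma cross_identity (y : I → E) {C₁ C₂ : Finset I} (h₁ : C₁.Nonempty) (h₂ : C₂.Nonempty) :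
    ∑ i ∈ C₁, ∑ j ∈ C₂, ‖y i - y j‖ ^ 2
      = (C₂.card : ℝ) * ∑ i ∈ C₁, ‖y i - centroid y C₁‖ ^ 2
        + (C₁.card : ℝ) * ∑ j ∈ C₂, ‖y j - centroid y C₂‖ ^ 2
        + (C₁.card : ℝ) * (C₂.card : ℝ) * ‖centroid y C₁ - centroid y C₂‖ ^ 2 := by
  have e1 := sum_eq_card_smul_centroid y h₁
  have e2 := sum_eq_card_smul_centroid y h₂
  have hs1 := sum_norm_sub_centroid y h₁
  have hs2 := sum_norm_sub_centroid y h₂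
  have step : ∀ i, ∑ j ∈ C₂, ‖y i - y j‖ ^ 2
      = (C₂.card : ℝ) * ‖y i‖ ^ 2 - 2 * ⟪y i, ∑ j ∈ C₂, y j⟫ + ∑ j ∈ C₂, ‖y j‖ ^ 2 := by
    intro i
    simp only [norm_sub_sq_real, Finset.sum_add_distrib, Finset.sum_sub_distrib,
      Finset.sum_const, nsmul_eq_mul, ← Finset.mul_sum, ← inner_sum]
  rw [Finset.sum_congr rfl (fun i _ => step i)]
  rw [Finset.sum_add_distrib, Finset.sum_sub_distrib, ← Finset.mul_sum, ← Finset.mul_sum,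
    ← sum_inner, Finset.sum_const, nsmul_eq_mul]
  rw [hs1, hs2, e1, e2, real_inner_smul_left, real_inner_smul_right,
    norm_sub_sq_real (centroid y C₁) (centroid y C₂)]
  ring

lemma same_identity (y : I → E) {C : Finset I} (hC : C.Nonempty) :
    ∑ i ∈ C, ∑ j ∈ C, ‖y i - y j‖ ^ 2
      = 2 * ((C.card : ℝ) * ∑ i ∈ C, ‖y i - centroid y C‖ ^ 2) := by
  have := cross_identity y hC hC
  simp only [sub_self, norm_zero] at this
  rw [this]; ring

end Helpers

/-- Distances between cluster centres are preserved up to `1 ± δ(1+2p)` under a JL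
projection. -/
theorem centre_distance_preserved {n n' : ℕ} (hn'0 : 0 < n') (hn'n : n' < n)
    {δ : ℝ} (hδ0 : 0 < δ) (hδ : δ < 1 / 2)
    {I : Type*} [Fintype I] [DecidableEq I]
    (x : I → EuclideanSpace ℝ (Fin n)) (x' : I → EuclideanSpace ℝ (Fin n'))
    (hJL : JLpair n n' δ x x')
    (C₁ C₂ : Finset I) (h₁ : C₁.Nonempty) (h₂ : C₂.Nonempty) (hdisj : Disjoint C₁ C₂)
    (hμ : centroid x C₁ ≠ centroid x C₂) (p : ℝ) (hp : 0 < p)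
    (hspread : clVar x C₁ * ((C₁.card + C₂.card : ℝ) / C₂.card)
        + clVar x C₂ * ((C₁.card + C₂.card : ℝ) / C₁.card)
      ≤ p * ‖centroid x C₁ - centroid x C₂‖ ^ 2) :
    (1 - δ * (1 + 2 * p)) * ‖centroid x C₁ - centroid x C₂‖ ^ 2 ≤
        (n : ℝ) / n' * ‖centroid x' C₁ - centroid x' C₂‖ ^ 2 ∧
    (n : ℝ) / n' * ‖centroid x' C₁ - centroid x' C₂‖ ^ 2 ≤
        (1 + δ * (1 + 2 * p)) * ‖centroid x C₁ - centroid x C₂‖ ^ 2 := by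
  simp only [clVar] at hspread
  set r : ℝ := (n : ℝ) / n' with hr
  set m₁ : ℝ := (C₁.card : ℝ) with hm₁
  set m₂ : ℝ := (C₂.card : ℝ) with hm₂
  have hm₁0 : 0 < m₁ := by rw [hm₁]; exact_mod_cast h₁.card_pos
  have hm₂0 : 0 < m₂ := by rw [hm₂]; exact_mod_cast h₂.card_pos
  set S₁ : ℝ := ∑ i ∈ C₁, ‖x i - centroid x C₁‖ ^ 2 with hS₁
  set S₂ : ℝ := ∑ i ∈ C₂, ‖x i - centroid x C₂‖ ^ 2 with hS₂
  set T₁ : ℝ := ∑ i ∈ C₁, ‖x' i - centroid x' C₁‖ ^ 2 with hT₁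
  set T₂ : ℝ := ∑ i ∈ C₂, ‖x' i - centroid x' C₂‖ ^ 2 with hT₂
  set D : ℝ := ‖centroid x C₁ - centroid x C₂‖ ^ 2 with hD
  set D' : ℝ := ‖centroid x' C₁ - centroid x' C₂‖ ^ 2 with hD'
  have hS₁0 : 0 ≤ S₁ := Finset.sum_nonneg fun i _ => by positivity
  have hS₂0 : 0 ≤ S₂ := Finset.sum_nonneg fun i _ => by positivity
  have hD0 : 0 ≤ D := by positivity
  -- spread bound, cleared of denominators
  have hS : m₂ * S₁ + m₁ * S₂ ≤ p * (m₁ * m₂ * D) := by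
    have hfield : m₁ * m₂ * (m₁⁻¹ * S₁ * ((m₁ + m₂) / m₂) + m₂⁻¹ * S₂ * ((m₁ + m₂) / m₁))
        = (m₁ + m₂) * S₁ + (m₁ + m₂) * S₂ := by
      field_simp
    have h := mul_le_mul_of_nonneg_left hspread (le_of_lt (mul_pos hm₁0 hm₂0))
    rw [hfield] at h
    linarith [mul_nonneg hm₁0.le hS₁0, mul_nonneg hm₂0.le hS₂0]
  -- summed JL inequalities
  have jl1 : ∀ A B : Finset I, (1 - δ) * ∑ i ∈ A, ∑ j ∈ B, ‖x i - x j‖ ^ 2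
      ≤ r * ∑ i ∈ A, ∑ j ∈ B, ‖x' i - x' j‖ ^ 2 := by
    intro A B
    rw [Finset.mul_sum, Finset.mul_sum]
    refine Finset.sum_le_sum fun i _ => ?_
    rw [Finset.mul_sum, Finset.mul_sum]
    exact Finset.sum_le_sum fun j _ => (hJL i j).1
  have jl2 : ∀ A B : Finset I, r * ∑ i ∈ A, ∑ j ∈ B, ‖x' i - x' j‖ ^ 2
      ≤ (1 + δ) * ∑ i ∈ A, ∑ j ∈ B, ‖x i - x j‖ ^ 2 := by
    intro A B
    rw [Finset.mul_sum, Finset.mul_sum]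
    refine Finset.sum_le_sum fun i _ => ?_
    rw [Finset.mul_sum, Finset.mul_sum]
    exact Finset.sum_le_sum fun j _ => (hJL i j).2
  -- cross identities
  have idA := cross_identity x h₁ h₂
  have idA' := cross_identity x' h₁ h₂
  have idB := same_identity x h₁
  have idB' := same_identity x' h₁
  have idC := same_identity x h₂
  have idC' := same_identity x' h₂
  rw [← hm₁, ← hm₂, ← hS₁, ← hS₂, ← hD] at idA
  rw [← hm₁, ← hm₂, ← hT₁, ← hT₂, ← hD'] at idA'
  rw [← hm₁, ← hS₁] at idB
  rw [← hm₁, ← hT₁] at idB'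
  rw [← hm₂, ← hS₂] at idC
  rw [← hm₂, ← hT₂] at idC'
  -- JL bounds on the pieces
  have hA_lb := jl1 C₁ C₂; have hA_ub := jl2 C₁ C₂
  have hB_lb := jl1 C₁ C₁; have hB_ub := jl2 C₁ C₁
  have hC_lb := jl1 C₂ C₂; have hC_ub := jl2 C₂ C₂
  rw [idA, idA'] at hA_lb hA_ub
  rw [idB, idB'] at hB_lb hB_ub
  rw [idC, idC'] at hC_lb hC_ub
  -- bounds on r * T₁, r * T₂
  have hT₁lb : (1 - δ) * S₁ ≤ r * T₁ := by
    have h2 : (2 * m₁) * ((1 - δ) * S₁) ≤ (2 * m₁) * (r * T₁) := by linarith [hB_lb]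
    exact le_of_mul_le_mul_left h2 (by positivity)
  have hT₁ub : r * T₁ ≤ (1 + δ) * S₁ := by
    have h2 : (2 * m₁) * (r * T₁) ≤ (2 * m₁) * ((1 + δ) * S₁) := by linarith [hB_ub]
    exact le_of_mul_le_mul_left h2 (by positivity)
  have hT₂lb : (1 - δ) * S₂ ≤ r * T₂ := by
    have h2 : (2 * m₂) * ((1 - δ) * S₂) ≤ (2 * m₂) * (r * T₂) := by linarith [hC_lb]
    exact le_of_mul_le_mul_left h2 (by positivity)
  have hT₂ub : r * T₂ ≤ (1 + δ) * S₂ := by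
    have h2 : (2 * m₂) * (r * T₂) ≤ (2 * m₂) * ((1 + δ) * S₂) := by linarith [hC_ub]
    exact le_of_mul_le_mul_left h2 (by positivity)
  constructor
  · -- lower bound
    have key : (m₁ * m₂) * ((1 - δ * (1 + 2 * p)) * D) ≤ (m₁ * m₂) * (r * D') := by
      have h1 := mul_le_mul_of_nonneg_left hT₁ub hm₂0.le
      have h2 := mul_le_mul_of_nonneg_left hT₂ub hm₁0.le
      have h3 := mul_le_mul_of_nonneg_left hS (by linarith : (0:ℝ) ≤ 2 * δ)
      linarith [hA_lb, h1, h2, h3]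
    exact le_of_mul_le_mul_left key (by positivity)
  · -- upper bound
    have key : (m₁ * m₂) * (r * D') ≤ (m₁ * m₂) * ((1 + δ * (1 + 2 * p)) * D) := by
      have h1 := mul_le_mul_of_nonneg_left hT₁lb hm₂0.le
      have h2 := mul_le_mul_of_nonneg_left hT₂lb hm₁0.le
      have h3 := mul_le_mul_of_nonneg_left hS (by linarith : (0:ℝ) ≤ 2 * δ)
      linarith [hA_ub, h1, h2, h3]
    exact le_of_mul_le_mul_left key (by positivity)
end

section
/- Let 0 < ν < 1 and 0 < s_p < 1 and set s = ν·s_p. Let D₁ : I×I → ℝ≥0 be a symmetric squared-distance function with D₁(i,i)=0 that has the √s-multiplicative-perturbation-robustness property with unique optimal partition 𝔠*. Let D₂ be a symmetric function with D₂(i,i)=0 and ν·D₁(i,j) ≤ D₂(i,j) ≤ (1/ν)·D₁(i,j) for all i ≠ j. Then D₂ has the √s_p-multiplicative-perturbation-robustness property, with the same optimal partition 𝔠*. -/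
open Finset

variable {I : Type*} [Fintype I] [DecidableEq I]

/-- Cost of a partition with respect to an abstract squared-distance function `D`. -/
noncomputable def costD (D : I → I → ℝ) (c : Finpartition (univ : Finset I)) : ℝ :=
  ∑ C ∈ c.parts, (1 / (2 * (C.card : ℝ))) * ∑ i ∈ C, ∑ j ∈ C, D i j

/-- `c` is the unique minimizer of `costD D'` over partitions into at most `k` nonempty
blocks, for every symmetric nonnegative `D'` vanishing on the diagonal with
`s·D ≤ D' ≤ (1/s)·D` off the diagonal.  `D` has the √s-multiplicative-perturbation-robustness
property iff such a partition `c` with at most `k` blocks exists. -/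
def robustUniqueOpt (k : ℕ) (s : ℝ) (D : I → I → ℝ)
    (c : Finpartition (univ : Finset I)) : Prop :=
  c.parts.card ≤ k ∧
  ∀ D' : I → I → ℝ, (∀ i j, D' j i = D' i j) → (∀ i, D' i i = 0) → (∀ i j, 0 ≤ D' i j) →
    (∀ i j, i ≠ j → s * D i j ≤ D' i j ∧ D' i j ≤ (1 / s) * D i j) →
    ∀ d : Finpartition (univ : Finset I), d.parts.card ≤ k → d ≠ c →
      costD D' c < costD D' d

/-- A `ν`-multiplicative perturbation of a `√(ν·s_p)`-multiplicatively-perturbation-robust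
squared-distance function is itself `√s_p`-multiplicatively-perturbation-robust, with the
same unique optimal partition. -/
theorem double_perturbation {I : Type*} [Fintype I] [DecidableEq I] (k : ℕ) (hk : 1 ≤ k)
    {ν sp : ℝ} (hν0 : 0 < ν) (hν1 : ν < 1) (hsp0 : 0 < sp) (hsp1 : sp < 1)
    (D₁ D₂ : I → I → ℝ)
    (hD₁symm : ∀ i j, D₁ j i = D₁ i j) (hD₁diag : ∀ i, D₁ i i = 0)
    (hD₁nonneg : ∀ i j, 0 ≤ D₁ i j)
    (hD₂symm : ∀ i j, D₂ j i = D₂ i j) (hD₂diag : ∀ i, D₂ i i = 0)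
    (hD₂nonneg : ∀ i j, 0 ≤ D₂ i j)
    (hpert : ∀ i j, i ≠ j → ν * D₁ i j ≤ D₂ i j ∧ D₂ i j ≤ (1 / ν) * D₁ i j)
    (cstar : Finpartition (univ : Finset I))
    (hrob : robustUniqueOpt k (ν * sp) D₁ cstar) :
    robustUniqueOpt k sp D₂ cstar := by
  obtain ⟨hcard, hmin⟩ := hrob
  refine ⟨hcard, fun D' hs hd hn hp d hdk hdne => ?_⟩
  refine hmin D' hs hd hn (fun i j hij => ?_) d hdk hdne
  obtain ⟨h1, h2⟩ := hpert i j hij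
  obtain ⟨h3, h4⟩ := hp i j hij
  constructor
  · calc ν * sp * D₁ i j = sp * (ν * D₁ i j) := by ring
    _ ≤ sp * D₂ i j := by nlinarith
    _ ≤ D' i j := h3
  · calc D' i j ≤ (1 / sp) * D₂ i j := h4
    _ ≤ (1 / sp) * ((1 / ν) * D₁ i j) := by
        have : 0 < 1 / sp := by positivity
        nlinarith
    _ = (1 / (ν * sp)) * D₁ i j := by rw [one_div, one_div, one_div, mul_inv]; ring
end

section
/- Let δ ∈ (0, 1/2) and suppose (x_i)_{i∈I} in ℝⁿ and (x'_i)_{i∈I} in ℝ^{n'} satisfy the (δ, n, n')-pairwise JL condition. Suppose the squared-distance function D₁(i,j) = ‖x_i − x_j‖² has the √s-multiplicative-perturbation-robustness property for some s with 0 < s ≤ 1−δ, with unique optimal partition 𝔠*. Then 𝔠* is also a k-optimal partition for the projected points (x'_i), i.e. it minimizes the k-means cost J((x'_i), ·) over partitions of I into at most k nonempty blocks. -/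
open Finset

variable {I : Type*} [Fintype I] [DecidableEq I]

set_option linter.unusedSectionVars false in
lemma sum_center_zero {E : Type*} [NormedAddCommGroup E] [InnerProductSpace ℝ E]
    (y : I → E) (C : Finset I) (hC : C.Nonempty) :
    ∑ i ∈ C, (y i - centroid y C) = 0 := by
  have hcard : (C.card : ℝ) ≠ 0 := Nat.cast_ne_zero.mpr hC.card_pos.ne'
  rw [Finset.sum_sub_distrib, Finset.sum_const]
  unfold _root_.centroid
  rw [← Nat.cast_smul_eq_nsmul ℝ, smul_smul, mul_inv_cancel₀ hcard, one_smul, sub_self]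

lemma double_sum_eq {E : Type*} [NormedAddCommGroup E] [InnerProductSpace ℝ E]
    (y : I → E) (C : Finset I) (hC : C.Nonempty) :
    ∑ i ∈ C, ∑ j ∈ C, ‖y i - y j‖ ^ 2
      = 2 * (C.card : ℝ) * ∑ i ∈ C, ‖y i - centroid y C‖ ^ 2 := by
  set μ := centroid y C with hμ
  have h1 : ∀ i j : I, ‖y i - y j‖ ^ 2
      = ‖y i - μ‖ ^ 2 + ‖y j - μ‖ ^ 2 - 2 * inner ℝ (y i - μ) (y j - μ) := by
    intro i j
    rw [← sub_sub_sub_cancel_right (y i) (y j) μ, norm_sub_sq_real]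
    ring
  have h2 : ∀ i ∈ C, ∑ j ∈ C, ‖y i - y j‖ ^ 2
      = (C.card : ℝ) * ‖y i - μ‖ ^ 2 + ∑ j ∈ C, ‖y j - μ‖ ^ 2 := by
    intro i _
    simp_rw [h1 i]
    rw [Finset.sum_sub_distrib, Finset.sum_add_distrib, Finset.sum_const,
      ← Finset.mul_sum, ← inner_sum, sum_center_zero y C hC, inner_zero_right,
      nsmul_eq_mul]
    ring
  rw [Finset.sum_congr rfl h2, Finset.sum_add_distrib, ← Finset.mul_sum,
    Finset.sum_const, nsmul_eq_mul]
  ring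

lemma costD_eq_kmeansCost {E : Type*} [NormedAddCommGroup E] [InnerProductSpace ℝ E]
    (y : I → E) (c : Finpartition (univ : Finset I)) :
    costD (fun i j => ‖y i - y j‖ ^ 2) c = kmeansCost y c := by
  unfold costD kmeansCost
  refine Finset.sum_congr rfl fun C hC => ?_
  have hCne : C.Nonempty := c.nonempty_of_mem_parts hC
  have hcard : (C.card : ℝ) ≠ 0 := Nat.cast_ne_zero.mpr hCne.card_pos.ne'
  rw [double_sum_eq y C hCne]
  field_simp

theorem identical_global_optimum' {n n' : ℕ} (hn'0 : 0 < n') (hn'n : n' < n)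
    {δ : ℝ} (hδ0 : 0 < δ) (hδ : δ < 1 / 2)
    {I : Type*} [Fintype I] [DecidableEq I]
    (x : I → EuclideanSpace ℝ (Fin n)) (x' : I → EuclideanSpace ℝ (Fin n'))
    (hJL : ∀ i j : I, (1 - δ) * ‖x i - x j‖ ^ 2 ≤ (n : ℝ) / n' * ‖x' i - x' j‖ ^ 2 ∧
      (n : ℝ) / n' * ‖x' i - x' j‖ ^ 2 ≤ (1 + δ) * ‖x i - x j‖ ^ 2)
    (k : ℕ) (hk : 1 ≤ k)
    {s : ℝ} (hs0 : 0 < s) (hs : s ≤ 1 - δ)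
    (cstar : Finpartition (univ : Finset I))
    (hrob : cstar.parts.card ≤ k ∧
      ∀ D' : I → I → ℝ, (∀ i j, D' j i = D' i j) → (∀ i, D' i i = 0) → (∀ i j, 0 ≤ D' i j) →
      (∀ i j, i ≠ j → s * ‖x i - x j‖ ^ 2 ≤ D' i j ∧ D' i j ≤ (1 / s) * ‖x i - x j‖ ^ 2) →
      ∀ d : Finpartition (univ : Finset I), d.parts.card ≤ k → d ≠ cstar →
        costD D' cstar < costD D' d) :
    ∀ d : Finpartition (univ : Finset I), d.parts.card ≤ k →
      kmeansCost x' cstar ≤ kmeansCost x' d := by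
  intro d hd
  by_cases hdc : d = cstar
  · subst hdc; exact le_refl _
  set r : ℝ := (n : ℝ) / n' with hr
  have hrpos : 0 < r := div_pos (Nat.cast_pos.mpr (hn'0.trans hn'n)) (Nat.cast_pos.mpr hn'0)
  set D' : I → I → ℝ := fun i j => r * ‖x' i - x' j‖ ^ 2 with hD'
  have hsym : ∀ i j, D' j i = D' i j := by
    intro i j; simp [hD', norm_sub_rev]
  have hdiag : ∀ i, D' i i = 0 := by intro i; simp [hD']
  have hnn : ∀ i j, 0 ≤ D' i j := by
    intro i j; exact mul_nonneg hrpos.le (sq_nonneg _)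
  have hbd : ∀ i j, i ≠ j → s * ‖x i - x j‖ ^ 2 ≤ D' i j ∧
      D' i j ≤ (1 / s) * ‖x i - x j‖ ^ 2 := by
    intro i j _
    obtain ⟨h1, h2⟩ := hJL i j
    have hD0 : (0:ℝ) ≤ ‖x i - x j‖ ^ 2 := sq_nonneg _
    constructor
    · calc s * ‖x i - x j‖ ^ 2 ≤ (1 - δ) * ‖x i - x j‖ ^ 2 :=
          mul_le_mul_of_nonneg_right hs hD0
        _ ≤ D' i j := h1
    · have h1s : 1 + δ ≤ 1 / s := by
        rw [le_div_iff₀ hs0]; nlinarith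
      calc D' i j ≤ (1 + δ) * ‖x i - x j‖ ^ 2 := h2
        _ ≤ (1 / s) * ‖x i - x j‖ ^ 2 := mul_le_mul_of_nonneg_right h1s hD0
  have hlt := hrob.2 D' hsym hdiag hnn hbd d hd hdc
  have hcost : ∀ c : Finpartition (univ : Finset I),
      costD D' c = r * kmeansCost x' c := by
    intro c
    rw [← costD_eq_kmeansCost x' c]
    unfold costD
    rw [Finset.mul_sum]
    refine Finset.sum_congr rfl fun C _ => ?_
    have hC : ∑ i ∈ C, ∑ j ∈ C, D' i j
        = r * ∑ i ∈ C, ∑ j ∈ C, ‖x' i - x' j‖ ^ 2 := by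
      simp_rw [hD', Finset.mul_sum]
    rw [hC]; ring
  rw [hcost, hcost] at hlt
  exact le_of_lt ((mul_lt_mul_iff_right₀ hrpos).mp hlt)

/-- If the squared distances of the original points are `√s`-multiplicative-perturbation
robust with `s ≤ 1 − δ`, then the unique optimal partition of the original points is also
a k-optimal partition for the projected points. -/
theorem identical_global_optimum {n n' : ℕ} (hn'0 : 0 < n') (hn'n : n' < n)
    {δ : ℝ} (hδ0 : 0 < δ) (hδ : δ < 1 / 2)
    {I : Type*} [Fintype I] [DecidableEq I]
    (x : I → EuclideanSpace ℝ (Fin n)) (x' : I → EuclideanSpace ℝ (Fin n'))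
    (hJL : JLpair n n' δ x x') (k : ℕ) (hk : 1 ≤ k)
    {s : ℝ} (hs0 : 0 < s) (hs : s ≤ 1 - δ)
    (cstar : Finpartition (univ : Finset I))
    (hrob : robustUniqueOpt k s (fun i j => ‖x i - x j‖ ^ 2) cstar) :
    ∀ d : Finpartition (univ : Finset I), d.parts.card ≤ k →
      kmeansCost x' cstar ≤ kmeansCost x' d :=
  identical_global_optimum' hn'0 hn'n hδ0 hδ x x' hJL k hk hs0 hs cstar hrob
end

section
/- Let 0 < n' < n be integers and δ ∈ (0, 1) with δ·n' < n − n'. Then μ({x ∈ ℝⁿ : (1−δ)‖x‖² ≤ (n/n')‖x'‖² ≤ (1+δ)‖x‖²}) ≥ 1 − (1−δ)^{n'/2}·(1 + δn'/(n−n'))^{(n−n')/2} − (1+δ)^{n'/2}·(1 − δn'/(n−n'))^{(n−n')/2}. -/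
open MeasureTheory ProbabilityTheory Real ENNReal NNReal

lemma pdf_mul_exp_sq (c x : ℝ) :
    gaussianPDFReal 0 1 x * Real.exp (c * x ^ 2)
      = (Real.sqrt (2 * π))⁻¹ * Real.exp (-(1/2 - c) * x ^ 2) := by
  simp only [gaussianPDFReal, NNReal.coe_one, mul_one, sub_zero]
  rw [mul_assoc, ← Real.exp_add]
  ring_nf

lemma gauss_sq_exp_integrable {c : ℝ} (hc : c < 1/2) :
    Integrable (fun x => Real.exp (c * x ^ 2)) (gaussianReal 0 1) := by
  rw [gaussianReal_of_var_ne_zero 0 one_ne_zero, gaussianPDF_def]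
  rw [show (fun x => ENNReal.ofReal (gaussianPDFReal 0 1 x))
      = (fun x => ((gaussianPDFReal 0 1 x).toNNReal : ℝ≥0∞)) from rfl]
  rw [integrable_withDensity_iff_integrable_smul
    ((measurable_gaussianPDFReal 0 1).real_toNNReal)]
  have : (fun x => (gaussianPDFReal 0 1 x).toNNReal • Real.exp (c * x ^ 2))
      = fun x => (Real.sqrt (2 * π))⁻¹ * Real.exp (-(1/2 - c) * x ^ 2) := by
    funext x
    rw [NNReal.smul_def, Real.coe_toNNReal _ (gaussianPDFReal_nonneg 0 1 x), smul_eq_mul, pdf_mul_exp_sq]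
  rw [this]
  exact (integrable_exp_neg_mul_sq (by linarith)).const_mul _

lemma gauss_sq_exp_integral {c : ℝ} (hc : c < 1/2) :
    ∫ x, Real.exp (c * x ^ 2) ∂(gaussianReal 0 1) = (1 - 2*c) ^ (-(1:ℝ)/2) := by
  have hb : (0:ℝ) < 1/2 - c := by linarith
  have h12 : (0:ℝ) < 1 - 2*c := by linarith
  have h2π : (0:ℝ) < 2*π := by positivity
  rw [gaussianReal_of_var_ne_zero 0 one_ne_zero, gaussianPDF_def]
  rw [show (fun x => ENNReal.ofReal (gaussianPDFReal 0 1 x))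
      = (fun x => ((gaussianPDFReal 0 1 x).toNNReal : ℝ≥0∞)) from rfl]
  rw [integral_withDensity_eq_integral_smul
    ((measurable_gaussianPDFReal 0 1).real_toNNReal)]
  have heq : (fun x => (gaussianPDFReal 0 1 x).toNNReal • Real.exp (c * x ^ 2))
      = fun x => (Real.sqrt (2 * π))⁻¹ * Real.exp (-(1/2 - c) * x ^ 2) := by
    funext x
    rw [NNReal.smul_def, Real.coe_toNNReal _ (gaussianPDFReal_nonneg 0 1 x), smul_eq_mul,
      pdf_mul_exp_sq]
  rw [heq, integral_const_mul, integral_gaussian]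
  rw [show π / (1/2 - c) = (2*π) / (1-2*c) by field_simp]
  rw [Real.sqrt_div h2π.le, show (-(1:ℝ)/2) = -(1/2) by ring, Real.rpow_neg h12.le,
    ← Real.sqrt_eq_rpow]
  have : Real.sqrt (2*π) ≠ 0 := by positivity
  field_simp

lemma integrable_pi_prod {ι E : Type*} [Fintype ι] [MeasurableSpace E] (μ : Measure E)
    [SigmaFinite μ] {f : ι → E → ℝ} (hf : ∀ i, Integrable (fun x => f i x) μ) :
    Integrable (fun x : ι → E => ∏ i, f i (x i)) (Measure.pi fun _ => μ) := by
  letI : MeasureSpace E := ⟨μ⟩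
  haveI : SigmaFinite (volume : Measure E) := ‹_›
  exact Integrable.fintype_prod hf

lemma integral_pi_prod {ι E : Type*} [Fintype ι] [MeasurableSpace E] (μ : Measure E)
    [SigmaFinite μ] (f : ι → E → ℝ) :
    ∫ x : ι → E, ∏ i, f i (x i) ∂(Measure.pi fun _ => μ) = ∏ i, ∫ x, f i x ∂μ := by
  letI : MeasureSpace E := ⟨μ⟩
  haveI : SigmaFinite (volume : Measure E) := ‹_›
  exact MeasureTheory.integral_fintype_prod_eq_prod (μ := fun _ => μ) f

lemma chernoff {ι : Type*} [Fintype ι] {c : ι → ℝ} (hc : ∀ i, c i < 1/2) :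
    (Measure.pi fun _ : ι => gaussianReal 0 1) {x | 0 ≤ ∑ i, c i * x i ^ 2}
      ≤ ENNReal.ofReal (∏ i, (1 - 2 * c i) ^ (-(1:ℝ)/2)) := by
  set ν := Measure.pi fun _ : ι => gaussianReal 0 1 with hν
  have hfeq : (fun x : ι → ℝ => Real.exp (∑ i, c i * x i ^ 2))
      = fun x : ι → ℝ => ∏ i, Real.exp (c i * x i ^ 2) := by
    funext x; exact Real.exp_sum _ _
  have hint : Integrable (fun x : ι → ℝ => Real.exp (∑ i, c i * x i ^ 2)) ν := by
    rw [hfeq]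
    exact integrable_pi_prod _ (fun i => gauss_sq_exp_integrable (hc i))
  have hval : ∫ x, Real.exp (∑ i, c i * x i ^ 2) ∂ν = ∏ i, (1 - 2 * c i) ^ (-(1:ℝ)/2) := by
    rw [hfeq, hν, integral_pi_prod (gaussianReal 0 1) (fun i (t : ℝ) => Real.exp (c i * t ^ 2))]
    exact Finset.prod_congr rfl fun i _ => by
      rw [gauss_sq_exp_integral (hc i)]
  have hset : {x : ι → ℝ | 0 ≤ ∑ i, c i * x i ^ 2}
      = {x : ι → ℝ | 1 ≤ Real.exp (∑ i, c i * x i ^ 2)} := by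
    ext x; simp [Real.one_le_exp_iff]
  have markov := mul_meas_ge_le_integral_of_nonneg
    (ae_of_all ν fun x => (Real.exp_pos (∑ i, c i * x i ^ 2)).le) hint 1
  rw [one_mul, hval] at markov
  rw [hset]
  have hne : ν {x : ι → ℝ | 1 ≤ Real.exp (∑ i, c i * x i ^ 2)} ≠ ⊤ := measure_ne_top _ _
  calc ν {x : ι → ℝ | 1 ≤ Real.exp (∑ i, c i * x i ^ 2)}
      = ENNReal.ofReal (ν {x : ι → ℝ | 1 ≤ Real.exp (∑ i, c i * x i ^ 2)}).toReal :=
        (ENNReal.ofReal_toReal hne).symm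
    _ ≤ ENNReal.ofReal (∏ i, (1 - 2 * c i) ^ (-(1:ℝ)/2)) := ENNReal.ofReal_le_ofReal markov

lemma filter_lt_eq_map {n n' : ℕ} (h : n' ≤ n) :
    Finset.univ.filter (fun i : Fin n => (i : ℕ) < n')
      = Finset.univ.map (Fin.castLEEmb h) := by
  ext i
  simp only [Finset.mem_filter, Finset.mem_univ, true_and, Finset.mem_map, Fin.castLEEmb_apply]
  constructor
  · intro hi
    exact ⟨⟨(i : ℕ), hi⟩, Fin.ext rfl⟩
  · rintro ⟨j, rfl⟩
    exact j.isLt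

lemma card_filter_lt {n n' : ℕ} (h : n' ≤ n) :
    (Finset.univ.filter (fun i : Fin n => (i : ℕ) < n')).card = n' := by
  rw [filter_lt_eq_map h, Finset.card_map, Finset.card_fin]

lemma card_filter_not_lt {n n' : ℕ} (h : n' ≤ n) :
    (Finset.univ.filter (fun i : Fin n => ¬ (i : ℕ) < n')).card = n - n' := by
  have h2 := Finset.card_filter_add_card_filter_not
    (s := (Finset.univ : Finset (Fin n))) (p := fun i : Fin n => (i : ℕ) < n')
  rw [card_filter_lt h, Finset.card_fin] at h2
  omega

lemma sum_castLE_eq {n n' : ℕ} (h : n' ≤ n) (y : Fin n → ℝ) :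
    ∑ j : Fin n', y (Fin.castLE h j)
      = ∑ i ∈ Finset.univ.filter (fun i : Fin n => (i : ℕ) < n'), y i := by
  rw [filter_lt_eq_map h, Finset.sum_map]
  rfl

lemma sum_ite_mul {n n' : ℕ} (a b : ℝ) (y : Fin n → ℝ) :
    ∑ i : Fin n, (if (i : ℕ) < n' then a else b) * y i
      = a * ∑ i ∈ Finset.univ.filter (fun i : Fin n => (i : ℕ) < n'), y i
        + b * ∑ i ∈ Finset.univ.filter (fun i : Fin n => ¬ (i : ℕ) < n'), y i := by
  rw [Finset.mul_sum, Finset.mul_sum, ← Finset.sum_filter_add_sum_filter_not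
    (Finset.univ : Finset (Fin n)) (fun i : Fin n => (i : ℕ) < n')]
  congr 1
  · exact Finset.sum_congr rfl fun i hi => by
      rw [if_pos (Finset.mem_filter.mp hi).2]
  · exact Finset.sum_congr rfl fun i hi => by
      rw [if_neg (Finset.mem_filter.mp hi).2]

lemma prod_ite_const {n n' : ℕ} (h : n' ≤ n) (a b : ℝ) :
    ∏ i : Fin n, (if (i : ℕ) < n' then a else b) = a ^ n' * b ^ (n - n') := by
  rw [Finset.prod_ite, Finset.prod_const, Finset.prod_const, card_filter_lt h,
    card_filter_not_lt h]

lemma inv_rpow_pow {u : ℝ} (hu : 0 < u) (m : ℕ) :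
    (u⁻¹ ^ (-(1:ℝ)/2)) ^ m = u ^ ((m : ℝ)/2) := by
  rw [← Real.rpow_natCast (u⁻¹ ^ (-(1:ℝ)/2)) m, ← Real.rpow_mul (inv_nonneg.mpr hu.le),
    Real.inv_rpow hu.le, ← Real.rpow_neg hu.le]
  congr 1
  ring

lemma tail_bound {n n' : ℕ} (hn'n : n' < n) {α β : ℝ} (hα : α < 1/2) (hβ : β < 1/2) :
    (Measure.pi fun _ : Fin n => gaussianReal 0 1)
        {x : Fin n → ℝ | 0 ≤ ∑ i : Fin n, (if (i : ℕ) < n' then α else β) * x i ^ 2}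
      ≤ ENNReal.ofReal
        (((1 - 2*α) ^ (-(1:ℝ)/2)) ^ n' * ((1 - 2*β) ^ (-(1:ℝ)/2)) ^ (n - n')) := by
  have h := chernoff (c := fun i : Fin n => if (i : ℕ) < n' then α else β)
    (fun i => by split <;> assumption)
  refine h.trans (le_of_eq ?_)
  congr 1
  have he : ∀ i : Fin n, (1 - 2 * (if (i : ℕ) < n' then α else β)) ^ (-(1:ℝ)/2)
      = if (i : ℕ) < n' then (1 - 2*α) ^ (-(1:ℝ)/2) else (1 - 2*β) ^ (-(1:ℝ)/2) := by
    intro i; split <;> rfl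
  rw [Finset.prod_congr rfl (fun i _ => he i), prod_ite_const hn'n.le]

lemma key1 {δ nr n'r S T : ℝ} (h1 : 1 - δ ≠ 0) (h3 : nr - n'r + δ * n'r ≠ 0) (h5 : n'r ≠ 0) :
    -δ / (2*(1-δ)) * S + δ * n'r / (2*(nr - n'r + δ * n'r)) * T
      = (δ * n'r / (2*(1-δ)*(nr - n'r + δ * n'r))) * ((1-δ)*(S+T) - nr/n'r * S) := by
  field_simp
  ring

lemma key2 {δ nr n'r S T : ℝ} (h2 : 1 + δ ≠ 0) (h4 : nr - n'r - δ * n'r ≠ 0) (h5 : n'r ≠ 0) :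
    δ / (2*(1+δ)) * S + -(δ * n'r) / (2*(nr - n'r - δ * n'r)) * T
      = (δ * n'r / (2*(1+δ)*(nr - n'r - δ * n'r))) * (nr/n'r * S - (1+δ)*(S+T)) := by
  field_simp
  ring

set_option maxHeartbeats 1000000 in
/-- For a standard Gaussian vector in `ℝⁿ`, the squared norm of the projection onto the
first `n'` coordinates, rescaled by `n/n'`, lies within relative error `δ` of the squared
norm of the full vector with the stated probability. -/
theorem gaussian_projection_bound {n n' : ℕ} (hn'0 : 0 < n') (hn'n : n' < n)
    {δ : ℝ} (hδ0 : 0 < δ) (hδ1 : δ < 1) (hδn : δ * n' < (n : ℝ) - n') :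
    ENNReal.ofReal (1
        - (1 - δ) ^ ((n' : ℝ) / 2) * (1 + δ * n' / ((n : ℝ) - n')) ^ (((n : ℝ) - n') / 2)
        - (1 + δ) ^ ((n' : ℝ) / 2) * (1 - δ * n' / ((n : ℝ) - n')) ^ (((n : ℝ) - n') / 2)) ≤
      (Measure.pi fun _ : Fin n => gaussianReal 0 1)
        {x : Fin n → ℝ |
          (1 - δ) * ∑ i, x i ^ 2 ≤
              (n : ℝ) / n' * ∑ j : Fin n', x (Fin.castLE hn'n.le j) ^ 2 ∧
          (n : ℝ) / n' * ∑ j : Fin n', x (Fin.castLE hn'n.le j) ^ 2 ≤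
              (1 + δ) * ∑ i, x i ^ 2} := by
  classical
  have hn'R : (0:ℝ) < n' := by exact_mod_cast hn'0
  have hnn'R : (n':ℝ) < n := by exact_mod_cast hn'n
  have hD : (0:ℝ) < (n:ℝ) - n' := by linarith
  have h1δ : (0:ℝ) < 1 - δ := by linarith
  have h1δ' : (0:ℝ) < 1 + δ := by linarith
  have hD1 : (0:ℝ) < (n:ℝ) - n' + δ * n' := by nlinarith
  have hD2 : (0:ℝ) < (n:ℝ) - n' - δ * n' := by linarith
  have hne1 : (1:ℝ) - δ ≠ 0 := h1δ.ne'
  have hne2 : (1:ℝ) + δ ≠ 0 := h1δ'.ne'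
  have hne3 : (n:ℝ) - n' + δ * n' ≠ 0 := hD1.ne'
  have hne4 : (n:ℝ) - n' - δ * n' ≠ 0 := hD2.ne'
  have hne5 : (n':ℝ) ≠ 0 := hn'R.ne'
  have hne6 : (n:ℝ) - n' ≠ 0 := hD.ne'
  have hy1 : (0:ℝ) < 1 + δ * n' / ((n:ℝ) - n') := by positivity
  have hy2 : (0:ℝ) < 1 - δ * n' / ((n:ℝ) - n') := by
    rw [sub_pos, div_lt_one hD]; exact hδn
  -- coefficient bounds
  have hα₁lt : -δ / (2*(1-δ)) < 1/2 := by
    have h0 : -δ / (2*(1-δ)) < 0 := div_neg_of_neg_of_pos (by linarith) (by linarith)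
    linarith
  have hβ₁lt : δ * n' / (2*((n:ℝ) - n' + δ * n')) < 1/2 := by
    rw [div_lt_iff₀ (by linarith)]; nlinarith
  have hα₂lt : δ / (2*(1+δ)) < 1/2 := by
    rw [div_lt_iff₀ (by linarith)]; nlinarith
  have hβ₂lt : -(δ * n') / (2*((n:ℝ) - n' - δ * n')) < 1/2 := by
    have h0 : -(δ * n') / (2*((n:ℝ) - n' - δ * n')) < 0 :=
      div_neg_of_neg_of_pos (by nlinarith) (by linarith)
    linarith
  -- base identities
  have hbase1 : 1 - 2*(-δ / (2*(1-δ))) = (1-δ)⁻¹ :=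
    eq_inv_of_mul_eq_one_right (by field_simp; ring)
  have hbase2 : 1 - 2*(δ * n' / (2*((n:ℝ) - n' + δ * n')))
      = (1 + δ * n' / ((n:ℝ) - n'))⁻¹ :=
    eq_inv_of_mul_eq_one_right (by field_simp; ring)
  have hbase3 : 1 - 2*(δ / (2*(1+δ))) = (1+δ)⁻¹ :=
    eq_inv_of_mul_eq_one_right (by field_simp; ring)
  have hbase4 : 1 - 2*(-(δ * n') / (2*((n:ℝ) - n' - δ * n')))
      = (1 - δ * n' / ((n:ℝ) - n'))⁻¹ :=
    eq_inv_of_mul_eq_one_right (by field_simp; ring)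
  -- tail measure bounds
  have hTA := tail_bound (n := n) (n' := n') hn'n hα₁lt hβ₁lt
  rw [hbase1, hbase2, inv_rpow_pow h1δ, inv_rpow_pow hy1, Nat.cast_sub hn'n.le] at hTA
  have hTB := tail_bound (n := n) (n' := n') hn'n hα₂lt hβ₂lt
  rw [hbase3, hbase4, inv_rpow_pow h1δ', inv_rpow_pow hy2, Nat.cast_sub hn'n.le] at hTB
  -- notation
  set P₁ : ℝ := (1 - δ) ^ ((n' : ℝ) / 2) * (1 + δ * n' / ((n : ℝ) - n')) ^ (((n : ℝ) - n') / 2)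
    with hP₁def
  set P₂ : ℝ := (1 + δ) ^ ((n' : ℝ) / 2) * (1 - δ * n' / ((n : ℝ) - n')) ^ (((n : ℝ) - n') / 2)
    with hP₂def
  have hP₁0 : 0 ≤ P₁ := mul_nonneg (Real.rpow_nonneg h1δ.le _) (Real.rpow_nonneg hy1.le _)
  have hP₂0 : 0 ≤ P₂ := mul_nonneg (Real.rpow_nonneg h1δ'.le _) (Real.rpow_nonneg hy2.le _)
  set A : Set (Fin n → ℝ) := {x : Fin n → ℝ |
    0 ≤ ∑ i : Fin n, (if (i : ℕ) < n' then -δ / (2*(1-δ))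
      else δ * n' / (2*((n:ℝ) - n' + δ * n'))) * x i ^ 2} with hAdef
  set B : Set (Fin n → ℝ) := {x : Fin n → ℝ |
    0 ≤ ∑ i : Fin n, (if (i : ℕ) < n' then δ / (2*(1+δ))
      else -(δ * n') / (2*((n:ℝ) - n' - δ * n'))) * x i ^ 2} with hBdef
  set E : Set (Fin n → ℝ) := {x : Fin n → ℝ |
          (1 - δ) * ∑ i, x i ^ 2 ≤
              (n : ℝ) / n' * ∑ j : Fin n', x (Fin.castLE hn'n.le j) ^ 2 ∧
          (n : ℝ) / n' * ∑ j : Fin n', x (Fin.castLE hn'n.le j) ^ 2 ≤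
              (1 + δ) * ∑ i, x i ^ 2} with hEdef
  have hmE : MeasurableSet E := by
    have h1 : Measurable fun x : Fin n → ℝ => (1 - δ) * ∑ i, x i ^ 2 := by fun_prop
    have h2 : Measurable fun x : Fin n → ℝ =>
        (n : ℝ) / n' * ∑ j : Fin n', x (Fin.castLE hn'n.le j) ^ 2 := by fun_prop
    have h3 : Measurable fun x : Fin n → ℝ => (1 + δ) * ∑ i, x i ^ 2 := by fun_prop
    exact (measurableSet_le h1 h2).inter (measurableSet_le h2 h3)
  have hsub : Eᶜ ⊆ A ∪ B := by
    intro x hx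
    simp only [hEdef, hAdef, hBdef, Set.mem_compl_iff, Set.mem_setOf_eq, not_and_or, not_le,
      Set.mem_union] at hx ⊢
    have hcast : ∑ j : Fin n', x (Fin.castLE hn'n.le j) ^ 2
        = ∑ i ∈ Finset.univ.filter (fun i : Fin n => (i : ℕ) < n'), x i ^ 2 :=
      sum_castLE_eq hn'n.le (fun i => x i ^ 2)
    set S := ∑ i ∈ Finset.univ.filter (fun i : Fin n => (i : ℕ) < n'), x i ^ 2 with hSdef
    set T := ∑ i ∈ Finset.univ.filter (fun i : Fin n => ¬ (i : ℕ) < n'), x i ^ 2 with hTdef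
    have hS0 : 0 ≤ S := Finset.sum_nonneg fun i _ => sq_nonneg _
    have hT0 : 0 ≤ T := Finset.sum_nonneg fun i _ => sq_nonneg _
    have htot : ∑ i, x i ^ 2 = S + T :=
      (Finset.sum_filter_add_sum_filter_not _ _ _).symm
    clear_value S T
    rcases hx with h | h
    · left
      rw [sum_ite_mul, ← hSdef, ← hTdef]
      rw [hcast, htot] at h
      have key := key1 (δ := δ) (nr := (n:ℝ)) (n'r := (n':ℝ)) (S := S) (T := T)
        hne1 hne3 hne5
      have ht : 0 < δ * n' / (2*(1-δ)*((n:ℝ) - n' + δ * n')) := by positivity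
      have hX : (0:ℝ) ≤ (1-δ)*(S+T) - (n:ℝ)/n' * S := by linarith
      have hmul := mul_nonneg ht.le hX
      linarith [key, hmul]
    · right
      rw [sum_ite_mul, ← hSdef, ← hTdef]
      rw [hcast, htot] at h
      have key := key2 (δ := δ) (nr := (n:ℝ)) (n'r := (n':ℝ)) (S := S) (T := T)
        hne2 hne4 hne5
      have ht : 0 < δ * n' / (2*(1+δ)*((n:ℝ) - n' - δ * n')) := by positivity
      have hX : (0:ℝ) ≤ (n:ℝ)/n' * S - (1+δ)*(S+T) := by linarith
      have hmul := mul_nonneg ht.le hX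
      linarith [key, hmul]
  have hEc : (Measure.pi fun _ : Fin n => gaussianReal 0 1) Eᶜ
      ≤ ENNReal.ofReal (P₁ + P₂) := by
    calc (Measure.pi fun _ : Fin n => gaussianReal 0 1) Eᶜ
        ≤ (Measure.pi fun _ : Fin n => gaussianReal 0 1) (A ∪ B) := measure_mono hsub
      _ ≤ (Measure.pi fun _ : Fin n => gaussianReal 0 1) A
          + (Measure.pi fun _ : Fin n => gaussianReal 0 1) B := measure_union_le _ _
      _ ≤ ENNReal.ofReal P₁ + ENNReal.ofReal P₂ := add_le_add hTA hTB
      _ = ENNReal.ofReal (P₁ + P₂) := (ENNReal.ofReal_add hP₁0 hP₂0).symm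
  have hE1 : (Measure.pi fun _ : Fin n => gaussianReal 0 1) E ≤ 1 := prob_le_one
  have hcompl : (Measure.pi fun _ : Fin n => gaussianReal 0 1) Eᶜ
      = 1 - (Measure.pi fun _ : Fin n => gaussianReal 0 1) E := by
    rw [measure_compl hmE (measure_ne_top _ _), measure_univ]
  have hEeq : (Measure.pi fun _ : Fin n => gaussianReal 0 1) E
      = 1 - (Measure.pi fun _ : Fin n => gaussianReal 0 1) Eᶜ := by
    rw [hcompl, ENNReal.sub_sub_cancel ENNReal.one_ne_top hE1]
  rw [hEeq]
  calc ENNReal.ofReal (1 - P₁ - P₂) = ENNReal.ofReal (1 - (P₁ + P₂)) := by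
        rw [sub_sub]
    _ = 1 - ENNReal.ofReal (P₁ + P₂) := by
        rw [ENNReal.ofReal_sub _ (by linarith), ENNReal.ofReal_one]
    _ ≤ 1 - (Measure.pi fun _ : Fin n => gaussianReal 0 1) Eᶜ := tsub_le_tsub_left hEc 1
end

section
/- Let δ ∈ (0, 1/2), ε ∈ (0, 1), let m ≥ 2 be an integer, and let 0 < n' < n be integers with δ·n' < n − n' and n' ≥ 2(−ln ε + 2 ln m)/(δ²/2 − δ³/3). Then m(m−1)·max{(1−δ)^{n'/2}·(1 + δn'/(n−n'))^{(n−n')/2}, (1+δ)^{n'/2}·(1 − δn'/(n−n'))^{(n−n')/2}} ≤ ε. -/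
open Real

lemma log_one_add_le_cubic {δ : ℝ} (h0 : 0 < δ) (h1 : δ < 1/2) :
    Real.log (1 + δ) ≤ δ - δ^2/2 + δ^3/3 := by
  have hsq : δ^2 ≤ 1/4 := by nlinarith
  have hy0 : (0:ℝ) ≤ δ - δ^2/2 + δ^3/3 := by nlinarith
  have hexp : 1 + (δ - δ^2/2 + δ^3/3) + (δ - δ^2/2 + δ^3/3)^2/2
      + (δ - δ^2/2 + δ^3/3)^3/6 ≤ Real.exp (δ - δ^2/2 + δ^3/3) := by
    have h := Real.sum_le_exp_of_nonneg hy0 4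
    have hs : ∑ i ∈ Finset.range 4, (δ - δ^2/2 + δ^3/3) ^ i / (Nat.factorial i)
        = 1 + (δ - δ^2/2 + δ^3/3) + (δ - δ^2/2 + δ^3/3)^2/2
          + (δ - δ^2/2 + δ^3/3)^3/6 := by
      simp [Finset.sum_range_succ, Nat.factorial]
    rwa [hs] at h
  have h6 : δ^6 ≤ δ^4 * (1/4) := by
    have := mul_le_mul_of_nonneg_left hsq (pow_nonneg h0.le 4)
    calc δ^6 = δ^4 * δ^2 := by ring
      _ ≤ δ^4 * (1/4) := this
  have h8 : δ^8 ≤ δ^4 * (1/16) := by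
    have h2 : δ^4 ≤ 1/16 := by nlinarith
    have := mul_le_mul_of_nonneg_left h2 (pow_nonneg h0.le 4)
    calc δ^8 = δ^4 * δ^4 := by ring
      _ ≤ δ^4 * (1/16) := this
  have hkey : 1 + δ ≤ 1 + (δ - δ^2/2 + δ^3/3) + (δ - δ^2/2 + δ^3/3)^2/2
      + (δ - δ^2/2 + δ^3/3)^3/6 := by
    nlinarith [pow_pos h0 4, pow_pos h0 5, pow_pos h0 7, pow_pos h0 9]
  have h2 := hkey.trans hexp
  calc Real.log (1 + δ) ≤ Real.log (Real.exp (δ - δ^2/2 + δ^3/3)) :=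
        Real.log_le_log (by linarith) h2
    _ = δ - δ^2/2 + δ^3/3 := Real.log_exp _

lemma log_one_sub_le_quad {δ : ℝ} (h0 : 0 < δ) (h1 : δ < 1/2) :
    Real.log (1 - δ) ≤ -(δ + δ^2/2) := by
  have hc0 : 0 < δ + δ^2/2 := by nlinarith
  have hc1 : |(-(δ + δ^2/2))| ≤ 1 := by
    rw [abs_neg, abs_of_pos hc0]; nlinarith
  have h := Real.exp_bound hc1 (n := 3) (by norm_num)
  have hsum : ∑ m ∈ Finset.range 3, (-(δ + δ^2/2)) ^ m / (Nat.factorial m)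
      = 1 - (δ + δ^2/2) + (δ + δ^2/2)^2/2 := by
    simp [Finset.sum_range_succ, Nat.factorial]
    ring
  rw [hsum] at h
  have habs : |(-(δ + δ^2/2))| ^ 3 * (((3:ℕ).succ : ℝ) / ((Nat.factorial 3 : ℕ) * (3:ℕ)))
      = (δ + δ^2/2)^3 * (2/9) := by
    rw [abs_neg, abs_of_pos hc0]
    norm_num [Nat.factorial]
  rw [habs] at h
  have hlow : 1 - (δ + δ^2/2) + (δ + δ^2/2)^2/2 - (δ + δ^2/2)^3 * (2/9)
      ≤ Real.exp (-(δ + δ^2/2)) := by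
    have h2 := abs_sub_le_iff.1 h
    linarith [h2.2]
  have h4 : δ^4 ≤ δ^3 * (1/2) := by
    have := mul_le_mul_of_nonneg_left h1.le (pow_nonneg h0.le 3)
    calc δ^4 = δ^3 * δ := by ring
      _ ≤ δ^3 * (1/2) := this
  have h5 : δ^5 ≤ δ^3 * (1/4) := by
    have hsq : δ^2 ≤ 1/4 := by nlinarith
    have := mul_le_mul_of_nonneg_left hsq (pow_nonneg h0.le 3)
    calc δ^5 = δ^3 * δ^2 := by ring
      _ ≤ δ^3 * (1/4) := this
  have h6 : δ^6 ≤ δ^3 * (1/8) := by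
    have hcb : δ^3 ≤ 1/8 := by nlinarith
    have := mul_le_mul_of_nonneg_left hcb (pow_nonneg h0.le 3)
    calc δ^6 = δ^3 * δ^3 := by ring
      _ ≤ δ^3 * (1/8) := this
  have hkey : 1 - δ ≤ Real.exp (-(δ + δ^2/2)) := by
    refine le_trans ?_ hlow
    nlinarith [pow_pos h0 3]
  calc Real.log (1 - δ) ≤ Real.log (Real.exp (-(δ + δ^2/2))) :=
        Real.log_le_log (by linarith) hkey
    _ = -(δ + δ^2/2) := Real.log_exp _

set_option maxHeartbeats 1000000 in
/-- The analytic core of the set version of the Johnson–Lindenstrauss lemma: the dimension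
bound on `n'` forces the union-bound failure probability below `ε`. -/
theorem union_bound_below_epsilon {δ ε : ℝ} (hδ0 : 0 < δ) (hδ : δ < 1 / 2)
    (hε0 : 0 < ε) (hε1 : ε < 1) {m n n' : ℕ} (hm : 2 ≤ m) (hn'0 : 0 < n') (hn'n : n' < n)
    (hδn : δ * n' < (n : ℝ) - n')
    (hn' : 2 * (-Real.log ε + 2 * Real.log m) / (δ ^ 2 / 2 - δ ^ 3 / 3) ≤ (n' : ℝ)) :
    (m : ℝ) * (m - 1) * max
        ((1 - δ) ^ ((n' : ℝ) / 2) * (1 + δ * n' / ((n : ℝ) - n')) ^ (((n : ℝ) - n') / 2))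
        ((1 + δ) ^ ((n' : ℝ) / 2) * (1 - δ * n' / ((n : ℝ) - n')) ^ (((n : ℝ) - n') / 2))
      ≤ ε := by
  have hm1 : (2:ℝ) ≤ (m:ℝ) := by exact_mod_cast hm
  have hmpos : (0:ℝ) < (m:ℝ) := by linarith
  have hn'pos : (0:ℝ) < (n':ℝ) := by exact_mod_cast hn'0
  set s : ℝ := (n:ℝ) - n' with hs_def
  have hs : 0 < s := lt_trans (by positivity) hδn
  set t : ℝ := δ * n' / s with ht_def
  have ht0 : 0 < t := div_pos (by positivity) hs
  have ht1 : t < 1 := (div_lt_one hs).mpr hδn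
  have hst : s / 2 * t = δ * n' / 2 := by
    rw [ht_def]; field_simp
  have hK : 0 < δ^2/2 - δ^3/3 := by nlinarith
  have hC : -Real.log ε + 2 * Real.log m ≤ (n':ℝ)/2 * (δ^2/2 - δ^3/3) := by
    rw [div_le_iff₀ hK] at hn'
    linarith
  have hεm : (0:ℝ) < ε / (m:ℝ)^2 := by positivity
  have hlogm : Real.log (ε / (m:ℝ)^2) = Real.log ε - 2*Real.log m := by
    rw [Real.log_div hε0.ne' (by positivity), Real.log_pow]; push_cast; ring
  have h1δ : (0:ℝ) < 1 - δ := by linarith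
  have h1δ' : (0:ℝ) < 1 + δ := by linarith
  have h1t : (0:ℝ) < 1 + t := by linarith
  have h1t' : (0:ℝ) < 1 - t := by linarith
  -- First term
  have hA : (1 - δ) ^ ((n' : ℝ) / 2) * (1 + t) ^ (s / 2) ≤ ε / (m:ℝ)^2 := by
    have hp1 := Real.rpow_pos_of_pos h1δ ((n' : ℝ) / 2)
    have hp2 := Real.rpow_pos_of_pos h1t (s / 2)
    rw [← Real.exp_log (mul_pos hp1 hp2), ← Real.exp_log hεm]
    apply Real.exp_le_exp.mpr
    rw [Real.log_mul hp1.ne' hp2.ne', Real.log_rpow h1δ, Real.log_rpow h1t, hlogm]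
    have hl1 : Real.log (1 - δ) ≤ -(δ + δ^2/2) := log_one_sub_le_quad hδ0 hδ
    have hl2 : Real.log (1 + t) ≤ t := by
      have := Real.log_le_sub_one_of_pos h1t; linarith
    have e1 : (n':ℝ)/2 * Real.log (1-δ) ≤ (n':ℝ)/2 * (-(δ + δ^2/2)) :=
      mul_le_mul_of_nonneg_left hl1 (by positivity)
    have e2 : s/2 * Real.log (1+t) ≤ δ * n' / 2 := by
      calc s/2 * Real.log (1+t) ≤ s/2 * t :=
            mul_le_mul_of_nonneg_left hl2 (by linarith)
        _ = δ * n' / 2 := hst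
    have e3 : (n':ℝ)/2 * (-(δ + δ^2/2)) + δ * n' / 2
        ≤ -((n':ℝ)/2 * (δ^2/2 - δ^3/3)) := by
      nlinarith [mul_pos hn'pos (pow_pos hδ0 3)]
    linarith
  -- Second term
  have hB : (1 + δ) ^ ((n' : ℝ) / 2) * (1 - t) ^ (s / 2) ≤ ε / (m:ℝ)^2 := by
    have hp1 := Real.rpow_pos_of_pos h1δ' ((n' : ℝ) / 2)
    have hp2 := Real.rpow_pos_of_pos h1t' (s / 2)
    rw [← Real.exp_log (mul_pos hp1 hp2), ← Real.exp_log hεm]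
    apply Real.exp_le_exp.mpr
    rw [Real.log_mul hp1.ne' hp2.ne', Real.log_rpow h1δ', Real.log_rpow h1t', hlogm]
    have hl1 : Real.log (1 + δ) ≤ δ - δ^2/2 + δ^3/3 := log_one_add_le_cubic hδ0 hδ
    have hl2 : Real.log (1 - t) ≤ -t := by
      have := Real.log_le_sub_one_of_pos h1t'; linarith
    have e1 : (n':ℝ)/2 * Real.log (1+δ) ≤ (n':ℝ)/2 * (δ - δ^2/2 + δ^3/3) :=
      mul_le_mul_of_nonneg_left hl1 (by positivity)
    have e2 : s/2 * Real.log (1-t) ≤ -(δ * n' / 2) := by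
      calc s/2 * Real.log (1-t) ≤ s/2 * (-t) :=
            mul_le_mul_of_nonneg_left hl2 (by linarith)
        _ = -(δ * n' / 2) := by rw [mul_neg, hst]
    have e3 : (n':ℝ)/2 * (δ - δ^2/2 + δ^3/3) + -(δ * n' / 2)
        = -((n':ℝ)/2 * (δ^2/2 - δ^3/3)) := by ring
    linarith
  have hmax := max_le hA hB
  have hmm : (0:ℝ) ≤ (m:ℝ) * ((m:ℝ) - 1) := mul_nonneg (by linarith) (by linarith)
  calc (m : ℝ) * ((m:ℝ) - 1) * max
        ((1 - δ) ^ ((n' : ℝ) / 2) * (1 + t) ^ (s / 2))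
        ((1 + δ) ^ ((n' : ℝ) / 2) * (1 - t) ^ (s / 2))
      ≤ (m : ℝ) * ((m:ℝ) - 1) * (ε / (m:ℝ)^2) := mul_le_mul_of_nonneg_left hmax hmm
    _ ≤ (m:ℝ)^2 * (ε / (m:ℝ)^2) := by
        have hle : (m:ℝ)*((m:ℝ)-1) ≤ (m:ℝ)^2 := by nlinarith [hmpos]
        exact mul_le_mul_of_nonneg_right hle hεm.le
    _ = ε := by field_simp
end
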